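/- arXiv:2111.05275 — 3 statements merged into one kernel-verified Lean document; each statement's English description precedes it below -/
import Mathlib

section
/- Let H ⊆ {0,1}^X be a concept class that admits a stable sample compression scheme (κ, ρ) of size k, and let A be the deterministic algorithm A(s) = ρ(κ(s)). Then for every distribution D realizable by H and every n ≥ k, CMI_D(A) ≤ 2k · log 2. -/
/- STATEMENT 2: a stable sample compression scheme (κ, ρ) of size k for H yields
CMI_D(A) ≤ 2 k log 2 for every H-realizable distribution D and n ≥ k, where A = ρ ∘ κ. -/

open MeasureTheory ProbabilityTheory Real

noncomputable section

def cprob {Ω α : Type*} [MeasurableSpace Ω] [DecidableEq α]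
    (μ : Measure Ω) (V : Ω → α) (v : α) (G : MeasurableSpace Ω) : Ω → ℝ :=
  μ[fun ω => if V ω = v then (1 : ℝ) else 0 | G]

def condEnt {Ω α : Type*} [mΩ : MeasurableSpace Ω] [Fintype α] [DecidableEq α]
    (μ : Measure Ω) (V : Ω → α) (G : MeasurableSpace Ω) : ℝ :=
  ∫ ω, ∑ v : α,
    -((@cprob Ω α mΩ _ μ V v G) ω * Real.log ((@cprob Ω α mΩ _ μ V v G) ω)) ∂μ

/-- conditional mutual information I(W;U|Z) := H(U|σ(Z)) - H(U|σ(Z)⊔σ(W)). -/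
def condMI {Ω α β γ : Type*} [MeasurableSpace Ω] [Fintype α] [DecidableEq α]
    (μ : Measure Ω) (U : Ω → α) (W : Ω → β) (mW : MeasurableSpace β)
    (Z : Ω → γ) (mZ : MeasurableSpace γ) : ℝ :=
  condEnt μ U (MeasurableSpace.comap Z mZ)
    - condEnt μ U (MeasurableSpace.comap Z mZ ⊔ MeasurableSpace.comap W mW)

abbrev SupOmega (X : Type*) (n : ℕ) := ((Fin 2 × Fin n) → X × Bool) × (Fin n → Fin 2)

def supMeasure {X : Type*} [MeasurableSpace X] (n : ℕ) (D : Measure (X × Bool)) :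
    Measure (SupOmega X n) :=
  (Measure.pi fun _ => D).prod (Measure.pi fun _ => (PMF.uniformOfFintype (Fin 2)).toMeasure)

def trainOf {X : Type*} {n : ℕ} (ω : SupOmega X n) : Fin n → X × Bool :=
  fun j => ω.1 (ω.2 j, j)

/-- a multiset of labeled examples is realizable by `H`. -/
def RealizableM {X : Type*} (H : Set (X → Bool)) (s : Multiset (X × Bool)) : Prop :=
  ∃ h ∈ H, ∀ z ∈ s, h z.1 = z.2

/-- the multiset of examples in a sample. -/
def toMultiset {X : Type*} {n : ℕ} (s : Fin n → X × Bool) : Multiset (X × Bool) :=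
  (Finset.univ : Finset (Fin n)).val.map s

/-- (κ, ρ) is a stable sample compression scheme of size `k` for `H`:
on every `H`-realizable sample of size ≥ k, κ picks a size-k sub-multiset (symmetry is
automatic since κ acts on multisets), ρ ∘ κ is an empirical risk minimizer, and removing
examples outside the compression set does not change the output. -/
structure StableCompressionScheme {X : Type*} (H : Set (X → Bool)) (k : ℕ)
    (κ : Multiset (X × Bool) → Multiset (X × Bool))
    (ρ : Multiset (X × Bool) → X → Bool) : Prop where
  sub : ∀ s, RealizableM H s → k ≤ Multiset.card s → κ s ≤ s
  size : ∀ s, RealizableM H s → k ≤ Multiset.card s → Multiset.card (κ s) = k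
  erm : ∀ s, RealizableM H s → k ≤ Multiset.card s → ∀ z ∈ s, ρ (κ s) z.1 = z.2
  stable : ∀ s, RealizableM H s → k ≤ Multiset.card s →
    ∀ s', κ s ≤ s' → s' ≤ s → ρ (κ s') = ρ (κ s)


open scoped ENNReal


section CubeSection
open Finset

attribute [local instance] Classical.propDecidable

variable {n : ℕ} {Y : Type*}

/-- size of the fiber of `u` under `F` inside `S`. -/
def fibc (F : (Fin n → Fin 2) → Y) (S : Finset (Fin n → Fin 2)) (u : Fin n → Fin 2) : ℕ :=
  (S.filter (fun v => F v = F u)).card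

/-- subcube with free coordinates `A` and base point `b`. -/
def cub (A : Finset (Fin n)) (b : Fin n → Fin 2) : Finset (Fin n → Fin 2) :=
  univ.filter (fun u => ∀ j, j ∉ A → u j = b j)

def flp : Fin 2 → Fin 2 := fun ε => if ε = 0 then 1 else 0

def fldir (j : Fin n) (u : Fin n → Fin 2) : Fin n → Fin 2 :=
  Function.update u j (flp (u j))

lemma flp_flp (ε : Fin 2) : flp (flp ε) = ε := by fin_cases ε <;> rfl

lemma flp_ne (ε : Fin 2) : flp ε ≠ ε := by fin_cases ε <;> decide

lemma fldir_apply_ne (j : Fin n) (u : Fin n → Fin 2) {i : Fin n} (h : i ≠ j) :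
    fldir j u i = u i := Function.update_of_ne h _ _

lemma fldir_apply_self (j : Fin n) (u : Fin n → Fin 2) : fldir j u j = flp (u j) :=
  Function.update_self _ _ _

lemma fldir_fldir (j : Fin n) (u : Fin n → Fin 2) : fldir j (fldir j u) = u := by
  funext i
  by_cases hij : i = j
  · subst hij
    rw [fldir_apply_self, fldir_apply_self, flp_flp]
  · rw [fldir_apply_ne _ _ hij, fldir_apply_ne _ _ hij]

lemma mem_cub {A : Finset (Fin n)} {b u : Fin n → Fin 2} :
    u ∈ cub A b ↔ ∀ j, j ∉ A → u j = b j := by simp [cub]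

lemma one_le_fibc (F : (Fin n → Fin 2) → Y) {S : Finset (Fin n → Fin 2)}
    {u : Fin n → Fin 2} (hu : u ∈ S) : 1 ≤ fibc F S u := by
  refine Finset.card_pos.2 ⟨u, ?_⟩
  simp [hu]

lemma fibc_mono (F : (Fin n → Fin 2) → Y) {S T : Finset (Fin n → Fin 2)}
    (h : S ⊆ T) (u : Fin n → Fin 2) : fibc F S u ≤ fibc F T u :=
  Finset.card_le_card (Finset.filter_subset_filter _ h)

/-- AM-GM-type log inequality. -/
lemma log_add_ge {x y : ℝ} (hx : 1 ≤ x) (hy : 1 ≤ y) :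
    (Real.log x + Real.log y) / 2 + Real.log 2 ≤ Real.log (x + y) := by
  have hx0 : (0:ℝ) < x := by linarith
  have hy0 : (0:ℝ) < y := by linarith
  have h4 : 2 * 2 * x * y ≤ (x + y) ^ 2 := by nlinarith [sq_nonneg (x - y)]
  have hlog : Real.log (2 * 2 * x * y) ≤ Real.log ((x + y) ^ 2) :=
    Real.log_le_log (by positivity) h4
  rw [Real.log_mul (by positivity) (by positivity), Real.log_mul (by positivity) (by positivity),
    Real.log_pow] at hlog
  have h22 : Real.log (2 * 2) = Real.log 2 + Real.log 2 := Real.log_mul (by norm_num) (by norm_num)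
  push_cast at hlog
  rw [h22] at hlog
  linarith

theorem cube_bound (F : (Fin n → Fin 2) → Y) (J : (Fin n → Fin 2) → Finset (Fin n))
    (hflip : ∀ u u', (∀ j ∈ J u ∪ J u', u j = u' j) → F u = F u') :
    ∀ A : Finset (Fin n), ∀ b : Fin n → Fin 2,
      (∑ u ∈ cub A b, ((A.card : ℝ) - 2 * ((J u ∩ A).card : ℝ))) * Real.log 2
        ≤ ∑ u ∈ cub A b, Real.log (fibc F (cub A b) u) := by
  intro A
  induction A using Finset.induction_on with
  | empty =>
    intro b
    have hC : cub (∅ : Finset (Fin n)) b = {b} := by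
      ext u
      simp only [mem_cub, Finset.mem_singleton]
      constructor
      · intro h; funext j; exact h j (by simp)
      · intro h j _; subst h; rfl
    rw [hC]
    have h1 : fibc F {b} b = 1 := by simp [fibc, Finset.filter_singleton]
    simp [h1]
  | @insert j A hjA ih =>
    intro b
    set C' := cub (insert j A) b with hC'def
    set H : Fin 2 → Finset (Fin n → Fin 2) := fun ε => cub A (Function.update b j ε) with hHdef
    -- membership facts
    have hmemH : ∀ {u : Fin n → Fin 2} {ε : Fin 2}, u ∈ H ε ↔ (u j = ε ∧ ∀ i, i ∉ A → i ≠ j → u i = b i) := by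
      intro u ε
      rw [hHdef]
      simp only [mem_cub]
      constructor
      · intro h
        refine ⟨by simpa using h j hjA, fun i hiA hij => ?_⟩
        have := h i hiA
        rwa [Function.update_of_ne hij] at this
      · rintro ⟨h1, h2⟩ i hiA
        by_cases hij : i = j
        · subst hij; simpa using h1
        · rw [Function.update_of_ne hij]; exact h2 i hiA hij
    have hHsub : ∀ ε, H ε ⊆ C' := by
      intro ε u hu
      rw [hmemH] at hu
      rw [hC'def, mem_cub]
      intro i hi
      simp only [Finset.mem_insert, not_or] at hi
      exact hu.2 i hi.2 hi.1
    have hmemC' : ∀ {u : Fin n → Fin 2}, u ∈ C' → u ∈ H (u j) := by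
      intro u hu
      rw [hC'def, mem_cub] at hu
      rw [hmemH]
      exact ⟨rfl, fun i hiA hij => hu i (by simp [hiA, hij])⟩
    have hdisj : Disjoint (H 0) (H 1) := by
      rw [Finset.disjoint_left]
      intro u h0 h1
      rw [hmemH] at h0 h1
      rw [h0.1] at h1
      exact absurd h1.1 (by decide)
    have hsplit : C' = H 0 ∪ H 1 := by
      apply Finset.Subset.antisymm
      · intro u hu
        have := hmemC' hu
        have hall : ∀ ε : Fin 2, ε = 0 ∨ ε = 1 := by decide
        rcases hall (u j) with h | h <;>
          rw [h] at this <;> simp [Finset.mem_union, this]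
      · exact Finset.union_subset (hHsub 0) (hHsub 1)
    -- abbreviations
    set σ : (Fin n → Fin 2) → (Fin n → Fin 2) := fldir j with hσdef
    set aN : (Fin n → Fin 2) → ℕ := fun u => fibc F (H (u j)) u with haNdef
    set good : (Fin n → Fin 2) → Prop := fun u => j ∉ J u ∧ j ∉ J (σ u) with hgooddef
    have hall : ∀ ε : Fin 2, ε = 0 ∨ ε = 1 := by decide
    have hσH : ∀ {u : Fin n → Fin 2} {ε : Fin 2}, u ∈ H ε → σ u ∈ H (flp ε) := by
      intro u ε hu
      rw [hmemH] at hu ⊢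
      refine ⟨by rw [hσdef, fldir_apply_self, hu.1], fun i hiA hij => ?_⟩
      rw [hσdef, fldir_apply_ne _ _ hij]
      exact hu.2 i hiA hij
    have hσC' : ∀ {u : Fin n → Fin 2}, u ∈ C' → σ u ∈ C' := by
      intro u hu
      exact hHsub _ (hσH (hmemC' hu))
    have hσj : ∀ u : Fin n → Fin 2, σ u j = flp (u j) := fun u => fldir_apply_self _ _
    have hσσ : ∀ u : Fin n → Fin 2, σ (σ u) = u := fun u => fldir_fldir _ _
    have hgoodσ : ∀ {u : Fin n → Fin 2}, good u → good (σ u) := by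
      intro u hg
      refine ⟨hg.2, ?_⟩
      rw [hσσ]
      exact hg.1
    have hFσ : ∀ {u : Fin n → Fin 2}, good u → F (σ u) = F u := by
      intro u hg
      refine (hflip u (σ u) ?_).symm
      intro i hi
      have hij : i ≠ j := by
        rintro rfl
        rcases Finset.mem_union.1 hi with h | h
        · exact hg.1 h
        · exact hg.2 h
      rw [hσdef, fldir_apply_ne _ _ hij]
    have hdisj' : ∀ ε : Fin 2, Disjoint (H ε) (H (flp ε)) := by
      intro ε
      rcases hall ε with h | h <;> rw [h]
      · exact hdisj
      · exact hdisj.symm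
    have haN1 : ∀ {u : Fin n → Fin 2}, u ∈ C' → 1 ≤ aN u := by
      intro u hu
      exact one_le_fibc F (hmemC' hu)
    -- the per-element key inequality
    have keyu : ∀ u ∈ C',
        (if good u then (Real.log (aN u) + Real.log (aN (σ u))) / 2 + Real.log 2
          else Real.log (aN u)) ≤ Real.log (fibc F C' u) := by
      intro u hu
      have h1 : 1 ≤ aN u := haN1 hu
      have hfib1 : (aN u : ℝ) ≤ (fibc F C' u : ℝ) := by
        exact_mod_cast fibc_mono F (hHsub (u j)) u
      by_cases hg : good u
      · rw [if_pos hg]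
        have hσu : σ u ∈ H (flp (u j)) := hσH (hmemC' hu)
        have h2 : 1 ≤ aN (σ u) := haN1 (hσC' hu)
        -- sum of the two half fibers embeds into the full fiber
        have hsum : aN u + aN (σ u) ≤ fibc F C' u := by
          have haσ : aN (σ u) = ((H (flp (u j))).filter (fun v => F v = F u)).card := by
            rw [haNdef]
            simp only [fibc, hσj u, hFσ hg]
          have hau : aN u = ((H (u j)).filter (fun v => F v = F u)).card := rfl
          rw [hau, haσ]
          have hsub1 : (H (u j)).filter (fun v => F v = F u)
              ∪ (H (flp (u j))).filter (fun v => F v = F u) ⊆ C'.filter (fun v => F v = F u) := by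
            refine Finset.union_subset ?_ ?_ <;>
              exact Finset.filter_subset_filter _ (hHsub _)
          have hdisj2 : Disjoint ((H (u j)).filter (fun v => F v = F u))
              ((H (flp (u j))).filter (fun v => F v = F u)) :=
            Finset.disjoint_filter_filter (hdisj' (u j))
          calc ((H (u j)).filter (fun v => F v = F u)).card
                + ((H (flp (u j))).filter (fun v => F v = F u)).card
              = (((H (u j)).filter (fun v => F v = F u))
                ∪ ((H (flp (u j))).filter (fun v => F v = F u))).card :=
                (Finset.card_union_of_disjoint hdisj2).symm
            _ ≤ (C'.filter (fun v => F v = F u)).card := Finset.card_le_card hsub1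
            _ = fibc F C' u := rfl
        have hx : (1:ℝ) ≤ (aN u : ℝ) := by exact_mod_cast h1
        have hy : (1:ℝ) ≤ (aN (σ u) : ℝ) := by exact_mod_cast h2
        calc (Real.log (aN u) + Real.log (aN (σ u))) / 2 + Real.log 2
            ≤ Real.log ((aN u : ℝ) + (aN (σ u) : ℝ)) := log_add_ge hx hy
          _ ≤ Real.log (fibc F C' u) := by
              apply Real.log_le_log (by linarith)
              exact_mod_cast hsum
      · rw [if_neg hg]
        apply Real.log_le_log (by exact_mod_cast h1)
        exact hfib1
    have S_le : (∑ u ∈ C', if good u then (Real.log (aN u) + Real.log (aN (σ u))) / 2 + Real.log 2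
          else Real.log (aN u)) ≤ ∑ u ∈ C', Real.log (fibc F C' u) :=
      Finset.sum_le_sum keyu
    -- split the ite sum
    set G : Finset (Fin n → Fin 2) := C'.filter good with hGdef
    have hsum_ite : (∑ u ∈ C', if good u then (Real.log (aN u) + Real.log (aN (σ u))) / 2 + Real.log 2
          else Real.log (aN u))
        = (∑ u ∈ G, ((Real.log (aN u) + Real.log (aN (σ u))) / 2 + Real.log 2))
          + ∑ u ∈ C'.filter (fun u => ¬ good u), Real.log (aN u) := by
      rw [Finset.sum_ite]
    have hreidx : ∑ u ∈ G, Real.log (aN (σ u)) = ∑ u ∈ G, Real.log (aN u) := by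
      refine Finset.sum_nbij' σ σ ?_ ?_ ?_ ?_ ?_
      · intro u hu
        rw [hGdef, Finset.mem_filter] at hu ⊢
        exact ⟨hσC' hu.1, hgoodσ hu.2⟩
      · intro u hu
        rw [hGdef, Finset.mem_filter] at hu ⊢
        exact ⟨hσC' hu.1, hgoodσ hu.2⟩
      · intro u _; exact hσσ u
      · intro u _; exact hσσ u
      · intro u _; rfl
    have hGsum : (∑ u ∈ G, ((Real.log (aN u) + Real.log (aN (σ u))) / 2 + Real.log 2))
        = (∑ u ∈ G, Real.log (aN u)) + G.card * Real.log 2 := by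
      rw [Finset.sum_add_distrib, Finset.sum_const, nsmul_eq_mul]
      congr 1
      rw [← Finset.sum_div, Finset.sum_add_distrib, hreidx]
      ring
    have hrecomb : (∑ u ∈ G, Real.log (aN u)) + ∑ u ∈ C'.filter (fun u => ¬ good u), Real.log (aN u)
        = ∑ u ∈ C', Real.log (aN u) := by
      rw [hGdef]
      exact Finset.sum_filter_add_sum_filter_not _ _ _
    -- halves
    have hhalves : ∑ u ∈ C', Real.log (aN u)
        = (∑ u ∈ H 0, Real.log (fibc F (H 0) u)) + ∑ u ∈ H 1, Real.log (fibc F (H 1) u) := by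
      rw [hsplit, Finset.sum_union hdisj]
      congr 1
      · refine Finset.sum_congr rfl fun u hu => ?_
        rw [haNdef]
        simp only []
        rw [(hmemH.mp hu).1]
      · refine Finset.sum_congr rfl fun u hu => ?_
        rw [haNdef]
        simp only []
        rw [(hmemH.mp hu).1]
    -- good count
    set cardJ : ℕ := (C'.filter (fun u => j ∈ J u)).card with hcardJdef
    have hGcard : (C'.card : ℝ) - 2 * (cardJ : ℝ) ≤ (G.card : ℝ) := by
      have hpart : G.card + (C'.filter (fun u => ¬ good u)).card = C'.card := by
        rw [hGdef]
        exact Finset.card_filter_add_card_filter_not _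
      have hbadsub : C'.filter (fun u => ¬ good u)
          ⊆ (C'.filter (fun u => j ∈ J u)) ∪ (C'.filter (fun u => j ∈ J (σ u))) := by
        intro u hu
        rw [Finset.mem_filter] at hu
        rw [hgooddef] at hu
        rcases not_and_or.1 hu.2 with h | h <;>
          simp [Finset.mem_union, Finset.mem_filter, hu.1, not_not.1 h]
      have hcard2 : (C'.filter (fun u => j ∈ J (σ u))).card = cardJ := by
        rw [hcardJdef]
        refine Finset.card_bij' (fun u _ => σ u) (fun u _ => σ u) ?_ ?_ ?_ ?_
        · intro u hu
          rw [Finset.mem_filter] at hu ⊢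
          exact ⟨hσC' hu.1, hu.2⟩
        · intro u hu
          rw [Finset.mem_filter] at hu ⊢
          refine ⟨hσC' hu.1, ?_⟩
          rw [hσσ]
          exact hu.2
        · intro u _; exact hσσ u
        · intro u _; exact hσσ u
      have hbad : (C'.filter (fun u => ¬ good u)).card ≤ 2 * cardJ := by
        calc (C'.filter (fun u => ¬ good u)).card
            ≤ ((C'.filter (fun u => j ∈ J u)) ∪ (C'.filter (fun u => j ∈ J (σ u)))).card :=
              Finset.card_le_card hbadsub
          _ ≤ (C'.filter (fun u => j ∈ J u)).card + (C'.filter (fun u => j ∈ J (σ u))).card :=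
              Finset.card_union_le _ _
          _ = 2 * cardJ := by rw [hcard2, hcardJdef]; ring
      have h1 : (C'.card : ℝ) = (G.card : ℝ) + ((C'.filter (fun u => ¬ good u)).card : ℝ) := by
        exact_mod_cast hpart.symm
      have h2 : ((C'.filter (fun u => ¬ good u)).card : ℝ) ≤ 2 * (cardJ : ℝ) := by
        exact_mod_cast hbad
      linarith
    -- target LHS rewriting
    have hins_card : ((insert j A).card : ℝ) = (A.card : ℝ) + 1 := by
      rw [Finset.card_insert_of_notMem hjA]
      push_cast; ring
    have hcap : ∀ u : Fin n → Fin 2, ((J u ∩ insert j A).card : ℝ)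
        = ((J u ∩ A).card : ℝ) + (if j ∈ J u then (1:ℝ) else 0) := by
      intro u
      by_cases hj : j ∈ J u
      · rw [if_pos hj, Finset.inter_insert_of_mem hj,
          Finset.card_insert_of_notMem (fun hmem => hjA (Finset.mem_inter.1 hmem).2)]
        push_cast; ring
      · rw [if_neg hj, Finset.inter_insert_of_notMem hj]
        ring
    have hLHS : (∑ u ∈ C', (((insert j A).card : ℝ) - 2 * ((J u ∩ insert j A).card : ℝ)))
        = (∑ u ∈ C', ((A.card : ℝ) - 2 * ((J u ∩ A).card : ℝ)))
          + ((C'.card : ℝ) - 2 * (cardJ : ℝ)) := by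
      have : ∀ u ∈ C', (((insert j A).card : ℝ) - 2 * ((J u ∩ insert j A).card : ℝ))
          = (((A.card : ℝ) - 2 * ((J u ∩ A).card : ℝ))
            + (1 - 2 * (if j ∈ J u then (1:ℝ) else 0))) := by
        intro u _
        rw [hins_card, hcap u]
        ring
      rw [Finset.sum_congr rfl this, Finset.sum_add_distrib]
      congr 1
      rw [Finset.sum_sub_distrib, Finset.sum_const, ← Finset.mul_sum, Finset.sum_boole]
      simp [hcardJdef]
    -- IH applications
    have hIH : (∑ u ∈ C', ((A.card : ℝ) - 2 * ((J u ∩ A).card : ℝ))) * Real.log 2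
        ≤ ∑ u ∈ C', Real.log (aN u) := by
      rw [hhalves, hsplit, Finset.sum_union hdisj, add_mul]
      exact add_le_add (ih (Function.update b j 0)) (ih (Function.update b j 1))
    have hlog2 : (0:ℝ) ≤ Real.log 2 := Real.log_nonneg (by norm_num)
    calc (∑ u ∈ C', (((insert j A).card : ℝ) - 2 * ((J u ∩ insert j A).card : ℝ))) * Real.log 2
        = (∑ u ∈ C', ((A.card : ℝ) - 2 * ((J u ∩ A).card : ℝ))) * Real.log 2
          + ((C'.card : ℝ) - 2 * (cardJ : ℝ)) * Real.log 2 := by rw [hLHS]; ring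
      _ ≤ (∑ u ∈ C', Real.log (aN u)) + (G.card : ℝ) * Real.log 2 := by
          exact add_le_add hIH (mul_le_mul_of_nonneg_right hGcard hlog2)
      _ = (∑ u ∈ C', if good u then (Real.log (aN u) + Real.log (aN (σ u))) / 2 + Real.log 2
            else Real.log (aN u)) := by
          rw [hsum_ite, hGsum, ← hrecomb]
          ring
      _ ≤ ∑ u ∈ C', Real.log (fibc F C' u) := S_le


theorem cube_final {n : ℕ} {Y : Type*} (F : (Fin n → Fin 2) → Y)
    (J : (Fin n → Fin 2) → Finset (Fin n)) (k : ℕ) (hJk : ∀ u, (J u).card ≤ k)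
    (hflip : ∀ u u', (∀ j ∈ J u ∪ J u', u j = u' j) → F u = F u') :
    ((n : ℝ) - 2 * k) * 2 ^ n * Real.log 2
      ≤ ∑ u : Fin n → Fin 2, Real.log (fibc F Finset.univ u) := by
  have h := cube_bound F J hflip Finset.univ (fun _ => 0)
  have hCuniv : cub (Finset.univ : Finset (Fin n)) (fun _ => 0) = Finset.univ := by
    rw [cub]
    refine Finset.filter_true_of_mem fun u _ => ?_
    intro j hj
    exact absurd (Finset.mem_univ j) hj
  rw [hCuniv] at h
  have hlog2 : (0:ℝ) ≤ Real.log 2 := Real.log_nonneg (by norm_num)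
  have hL : ((n : ℝ) - 2 * k) * 2 ^ n
      ≤ ∑ u : Fin n → Fin 2, (((Finset.univ : Finset (Fin n)).card : ℝ)
          - 2 * ((J u ∩ Finset.univ).card : ℝ)) := by
    have hcard : ((Finset.univ : Finset (Fin n)).card : ℝ) = (n : ℝ) := by
      rw [Finset.card_univ, Fintype.card_fin]
    have hterm : ∀ u : Fin n → Fin 2, ((n : ℝ) - 2 * k)
        ≤ (((Finset.univ : Finset (Fin n)).card : ℝ) - 2 * ((J u ∩ Finset.univ).card : ℝ)) := by
      intro u
      rw [hcard, Finset.inter_univ]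
      have := hJk u
      have : ((J u).card : ℝ) ≤ (k : ℝ) := by exact_mod_cast this
      linarith
    calc ((n : ℝ) - 2 * k) * 2 ^ n
        = ∑ _u : Fin n → Fin 2, ((n : ℝ) - 2 * k) := by
          rw [Finset.sum_const, Finset.card_univ, nsmul_eq_mul]
          have : (Fintype.card (Fin n → Fin 2) : ℝ) = 2 ^ n := by
            simp [Fintype.card_fun]
          rw [this]
          ring
      _ ≤ _ := Finset.sum_le_sum fun u _ => hterm u
  calc ((n : ℝ) - 2 * k) * 2 ^ n * Real.log 2
      ≤ (∑ u : Fin n → Fin 2, (((Finset.univ : Finset (Fin n)).card : ℝ)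
          - 2 * ((J u ∩ Finset.univ).card : ℝ))) * Real.log 2 :=
        mul_le_mul_of_nonneg_right hL hlog2
    _ ≤ _ := h


end CubeSection


lemma multiset_exists_le_map {α β : Type*} [DecidableEq α] [DecidableEq β] (g : α → β) :
    ∀ (c : Multiset β) (m : Multiset α), c ≤ m.map g → ∃ d ≤ m, d.map g = c := by
  intro c
  induction c using Multiset.induction_on with
  | empty => exact fun m _ => ⟨0, Multiset.zero_le m, rfl⟩
  | cons a c ihc =>
    intro m h
    have ha : a ∈ m.map g := Multiset.mem_of_le h (Multiset.mem_cons_self a c)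
    obtain ⟨i, him, rfl⟩ := Multiset.mem_map.1 ha
    have hc : c ≤ (m.erase i).map g := by
      have h1 : (g i ::ₘ c).erase (g i) ≤ (m.map g).erase (g i) :=
        Multiset.erase_le_erase (g i) h
      rw [Multiset.erase_cons_head] at h1
      have h2 : (m.map g).erase (g i) = (m.erase i).map g := by
        conv_lhs => rw [← Multiset.cons_erase him]
        rw [Multiset.map_cons, Multiset.erase_cons_head]
      rwa [h2] at h1
    obtain ⟨d, hd, rfl⟩ := ihc (m.erase i) hc
    refine ⟨i ::ₘ d, ?_, by rw [Multiset.map_cons]⟩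
    calc i ::ₘ d ≤ i ::ₘ m.erase i := Multiset.cons_le_cons i hd
      _ = m := Multiset.cons_erase him

/-- the hypothesis function: `A`'s output on the training sample built from `z` and `u`. -/
def Fz {X : Type*} {n : ℕ} (κ : Multiset (X × Bool) → Multiset (X × Bool))
    (ρ : Multiset (X × Bool) → X → Bool) (z : Fin 2 × Fin n → X × Bool)
    (u : Fin n → Fin 2) : X → Bool :=
  ρ (κ (toMultiset (fun j => z (u j, j))))

lemma scheme_flip {X : Type*} {H : Set (X → Bool)} {k : ℕ}
    {κ : Multiset (X × Bool) → Multiset (X × Bool)} {ρ : Multiset (X × Bool) → X → Bool}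
    (hscheme : StableCompressionScheme H k κ ρ) {n : ℕ} (hn : k ≤ n)
    {z : Fin 2 × Fin n → X × Bool} (h0 : X → Bool) (h0H : h0 ∈ H)
    (hz : ∀ c, h0 ((z c).1) = (z c).2) :
    ∃ J : (Fin n → Fin 2) → Finset (Fin n), (∀ u, (J u).card ≤ k) ∧
      ∀ u u', (∀ j ∈ J u ∪ J u', u j = u' j) → Fz κ ρ z u = Fz κ ρ z u' := by
  classical
  set sm : (Fin n → Fin 2) → Multiset (X × Bool) :=
    fun u => toMultiset (fun j => z (u j, j)) with hsmdef
  have hrealz : ∀ u, RealizableM H (sm u) := by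
    intro u
    refine ⟨h0, h0H, fun e he => ?_⟩
    obtain ⟨j, _, rfl⟩ := Multiset.mem_map.1 he
    exact hz (u j, j)
  have hcard : ∀ u, Multiset.card (sm u) = n := by
    intro u
    rw [hsmdef]
    simp [toMultiset]
  have hkcard : ∀ u, k ≤ Multiset.card (sm u) := fun u => (hcard u).symm ▸ hn
  -- choose index sets
  have hex : ∀ u : Fin n → Fin 2, ∃ Jf : Finset (Fin n), Jf.card ≤ k ∧
      κ (sm u) = Jf.val.map (fun j => z (u j, j)) := by
    intro u
    have hsub : κ (sm u) ≤ (Finset.univ : Finset (Fin n)).val.map (fun j => z (u j, j)) :=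
      hscheme.sub (sm u) (hrealz u) (hkcard u)
    obtain ⟨d, hd, hdc⟩ := multiset_exists_le_map _ _ _ hsub
    have hnodup : d.Nodup := Multiset.nodup_of_le hd Finset.univ.nodup
    refine ⟨⟨d, hnodup⟩, ?_, hdc.symm⟩
    show Multiset.card d ≤ k
    have : Multiset.card (d.map (fun j => z (u j, j))) = Multiset.card d := Multiset.card_map _ _
    rw [hdc] at this
    rw [← this, hscheme.size (sm u) (hrealz u) (hkcard u)]
  choose J hJcard hJrep using hex
  refine ⟨J, hJcard, fun u u' hagree => ?_⟩
  set T : Finset (Fin n) := Finset.univ.filter (fun j => u j = u' j) with hTdef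
  have hJuT : J u ⊆ T := by
    intro j hj
    rw [hTdef, Finset.mem_filter]
    exact ⟨Finset.mem_univ j, hagree j (Finset.mem_union_left _ hj)⟩
  have hJu'T : J u' ⊆ T := by
    intro j hj
    rw [hTdef, Finset.mem_filter]
    exact ⟨Finset.mem_univ j, hagree j (Finset.mem_union_right _ hj)⟩
  set t : Multiset (X × Bool) := T.val.map (fun j => z (u j, j)) with htdef
  have ht' : t = T.val.map (fun j => z (u' j, j)) := by
    rw [htdef]
    refine Multiset.map_congr rfl fun j hj => ?_
    have : u j = u' j := by
      have hj' : j ∈ T := hj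
      rw [hTdef, Finset.mem_filter] at hj'
      exact hj'.2
    rw [this]
  have h1 : κ (sm u) ≤ t := by
    rw [hJrep u, htdef]
    exact Multiset.map_le_map (Finset.val_le_iff.2 hJuT)
  have h2 : t ≤ sm u := by
    rw [htdef, hsmdef]
    exact Multiset.map_le_map (Finset.val_le_iff.2 (Finset.subset_univ T))
  have h1' : κ (sm u') ≤ t := by
    rw [hJrep u', ht']
    exact Multiset.map_le_map (Finset.val_le_iff.2 hJu'T)
  have h2' : t ≤ sm u' := by
    rw [ht', hsmdef]
    exact Multiset.map_le_map (Finset.val_le_iff.2 (Finset.subset_univ T))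
  have e1 : ρ (κ t) = ρ (κ (sm u)) := hscheme.stable (sm u) (hrealz u) (hkcard u) t h1 h2
  have e2 : ρ (κ t) = ρ (κ (sm u')) := hscheme.stable (sm u') (hrealz u') (hkcard u') t h1' h2'
  show ρ (κ (sm u)) = ρ (κ (sm u'))
  rw [← e1, e2]

-- ============ PART 3 : measure-theoretic lemmas ============
section Part3

variable {X : Type*} [MeasurableSpace X] {n : ℕ}

/-- the uniform measure on `Fin n → Fin 2`. -/
def unifN (n : ℕ) : Measure (Fin n → Fin 2) :=
  Measure.pi fun _ => (PMF.uniformOfFintype (Fin 2)).toMeasure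

lemma supMeasure_eq (D : Measure (X × Bool)) :
    supMeasure n D = (Measure.pi fun _ => D).prod (unifN n) := rfl

instance (n : ℕ) : IsProbabilityMeasure (unifN n) := by
  unfold unifN; infer_instance

lemma unifN_singleton (u : Fin n → Fin 2) : unifN n {u} = (2 : ℝ≥0∞)⁻¹ ^ n := by
  have h1 : ({u} : Set (Fin n → Fin 2)) = Set.pi Set.univ (fun j => {u j}) :=
    (Set.univ_pi_singleton u).symm
  rw [unifN, h1, Measure.pi_pi]
  have h2 : ∀ j : Fin n, (PMF.uniformOfFintype (Fin 2)).toMeasure {u j} = (2 : ℝ≥0∞)⁻¹ := by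
    intro j
    rw [PMF.toMeasure_apply_singleton _ _ (measurableSet_singleton _),
      PMF.uniformOfFintype_apply]
    norm_num
  simp [h2]

lemma measurable_trainOf : Measurable (trainOf : SupOmega X n → (Fin n → X × Bool)) := by
  apply measurable_pi_lambda
  intro j
  have hrw : (fun ω : SupOmega X n => ω.1 (ω.2 j, j))
      = fun ω : SupOmega X n => if ω.2 j = 0 then ω.1 (0, j) else ω.1 (1, j) := by
    funext ω
    by_cases h : ω.2 j = 0
    · rw [if_pos h, h]
    · have h1 : ω.2 j = 1 := by
        have : ∀ ε : Fin 2, ε = 0 ∨ ε = 1 := by decide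
        rcases this (ω.2 j) with h' | h'
        · exact absurd h' h
        · exact h'
      rw [if_neg h, h1]
  show Measurable fun ω : SupOmega X n => ω.1 (ω.2 j, j)
  rw [hrw]
  refine Measurable.ite ?_ ?_ ?_
  · exact (measurable_pi_apply j).comp measurable_snd (measurableSet_singleton 0)
  · exact (measurable_pi_apply (0, j)).comp measurable_fst
  · exact (measurable_pi_apply (1, j)).comp measurable_fst

/-- indicator integrability -/
lemma integrable_ind {Ω : Type*} [MeasurableSpace Ω] (μ : Measure Ω) [IsFiniteMeasure μ]
    {p : Ω → Prop} (hp : MeasurableSet {ω | p ω}) [DecidablePred p] :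
    Integrable (fun ω => if p ω then (1 : ℝ) else 0) μ := by
  have hm : Measurable (fun ω => if p ω then (1 : ℝ) else 0) :=
    Measurable.ite hp measurable_const measurable_const
  refine Integrable.mono' (integrable_const (1 : ℝ)) hm.aestronglyMeasurable ?_
  filter_upwards with ω
  by_cases h : p ω <;> simp [h]

/-- set integral of an indicator of `{V = u}` -/
lemma setIntegral_ind {Ω α : Type*} [MeasurableSpace Ω] [DecidableEq α] (μ : Measure Ω)
    (V : Ω → α) (u : α) {s : Set Ω} (hVu : MeasurableSet {ω | V ω = u}) (hs : MeasurableSet s) :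
    ∫ ω in s, (if V ω = u then (1 : ℝ) else 0) ∂μ = (μ ({ω | V ω = u} ∩ s)).toReal := by
  have h1 : (fun ω => if V ω = u then (1 : ℝ) else 0) = Set.indicator {ω | V ω = u} 1 := by
    funext ω
    by_cases h : V ω = u <;> simp [Set.indicator_apply, h]
  have h2 := integral_indicator_one (μ := μ.restrict s) hVu
  rw [Measure.real, Measure.restrict_apply hVu] at h2
  rw [h1]
  exact h2

instance instSupProb (D : Measure (X × Bool)) [IsProbabilityMeasure D] :
    IsProbabilityMeasure (supMeasure n D) := by
  unfold supMeasure; infer_instance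

lemma measurableSet_sndeq (u : Fin n → Fin 2) :
    MeasurableSet {ω : SupOmega X n | ω.2 = u} :=
  measurable_snd (measurableSet_singleton u)

lemma toReal_twopow : ((2 : ℝ≥0∞)⁻¹ ^ n).toReal = ((2 : ℝ) ^ n)⁻¹ := by
  simp [ENNReal.toReal_pow, ENNReal.toReal_inv, inv_pow]

lemma cprob_fst (D : Measure (X × Bool)) [IsProbabilityMeasure D] (u : Fin n → Fin 2) :
    cprob (supMeasure n D) (fun ω : SupOmega X n => ω.2) u
      (MeasurableSpace.comap (fun ω : SupOmega X n => ω.1) inferInstance)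
    =ᵐ[supMeasure n D] fun _ => ((2 : ℝ) ^ n)⁻¹ := by
  set μ := supMeasure n D with hμdef
  set ν := (Measure.pi fun _ : Fin 2 × Fin n => D) with hνdef
  have hμprod : μ = ν.prod (unifN n) := rfl
  have hm : MeasurableSpace.comap (fun ω : SupOmega X n => ω.1) inferInstance
      ≤ (inferInstance : MeasurableSpace (SupOmega X n)) := measurable_fst.comap_le
  have hf : Integrable (fun ω : SupOmega X n => if ω.2 = u then (1:ℝ) else 0) μ :=
    integrable_ind μ (measurableSet_sndeq u)
  refine (ae_eq_condExp_of_forall_setIntegral_eq hm hf ?_ ?_ ?_).symm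
  · intro s _ _
    exact integrableOn_const (measure_lt_top μ s).ne
  · rintro s ⟨B, hB, rfl⟩ _
    have hsm : MeasurableSet ((fun ω : SupOmega X n => ω.1) ⁻¹' B) := measurable_fst hB
    rw [setIntegral_const, setIntegral_ind μ _ u (measurableSet_sndeq u) hsm]
    have h1 : {ω : SupOmega X n | ω.2 = u} ∩ ((fun ω : SupOmega X n => ω.1) ⁻¹' B)
        = B ×ˢ ({u} : Set (Fin n → Fin 2)) := by
      ext ω
      simp only [Set.mem_inter_iff, Set.mem_setOf_eq, Set.mem_preimage, Set.mem_prod,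
        Set.mem_singleton_iff]
      tauto
    have h2 : ((fun ω : SupOmega X n => ω.1) ⁻¹' B)
        = B ×ˢ (Set.univ : Set (Fin n → Fin 2)) := by
      ext ω
      simp [Set.mem_prod]
    rw [h1, h2, hμprod, Measure.real, Measure.prod_prod, Measure.prod_prod, unifN_singleton,
      measure_univ, mul_one]
    rw [ENNReal.toReal_mul, toReal_twopow, smul_eq_mul]
  · exact ⟨fun _ => ((2 : ℝ) ^ n)⁻¹, stronglyMeasurable_const, Filter.EventuallyEq.rfl⟩

lemma condEnt_fst (D : Measure (X × Bool)) [IsProbabilityMeasure D] :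
    condEnt (supMeasure n D) (fun ω : SupOmega X n => ω.2)
      (MeasurableSpace.comap (fun ω : SupOmega X n => ω.1) inferInstance)
    = (n : ℝ) * Real.log 2 := by
  set μ := supMeasure n D with hμdef
  have hae : ∀ᵐ ω ∂μ, ∀ u : Fin n → Fin 2,
      cprob μ (fun ω : SupOmega X n => ω.2) u
        (MeasurableSpace.comap (fun ω : SupOmega X n => ω.1) inferInstance) ω
      = ((2 : ℝ) ^ n)⁻¹ := ae_all_iff.2 (fun u => cprob_fst D u)
  have hcongr : condEnt μ (fun ω : SupOmega X n => ω.2)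
      (MeasurableSpace.comap (fun ω : SupOmega X n => ω.1) inferInstance)
      = ∫ _ω, ∑ _v : Fin n → Fin 2,
          -(((2 : ℝ) ^ n)⁻¹ * Real.log ((2 : ℝ) ^ n)⁻¹) ∂μ := by
    refine integral_congr_ae ?_
    filter_upwards [hae] with ω h
    exact Finset.sum_congr rfl fun v _ => by rw [h v]
  rw [condEnt] at hcongr ⊢
  rw [hcongr, integral_const, Measure.real, measure_univ, ENNReal.toReal_one, one_smul,
    Finset.sum_const, Finset.card_univ]
  have hcard : Fintype.card (Fin n → Fin 2) = 2 ^ n := by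
    simp [Fintype.card_fun]
  rw [hcard, nsmul_eq_mul]
  have h2n : ((2 : ℝ) ^ n) ≠ 0 := by positivity
  rw [Real.log_inv, Real.log_pow]
  push_cast
  field_simp

variable {κ : Multiset (X × Bool) → Multiset (X × Bool)} {ρ : Multiset (X × Bool) → X → Bool}

/-- output of the algorithm on the supersample. -/
def WW (κ : Multiset (X × Bool) → Multiset (X × Bool)) (ρ : Multiset (X × Bool) → X → Bool) :
    SupOmega X n → (X → Bool) := fun ω => ρ (κ (toMultiset (trainOf ω)))

def G2sig (κ : Multiset (X × Bool) → Multiset (X × Bool)) (ρ : Multiset (X × Bool) → X → Bool) :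
    MeasurableSpace (SupOmega X n) :=
  MeasurableSpace.comap (fun ω : SupOmega X n => ω.1) inferInstance
    ⊔ MeasurableSpace.comap (WW κ ρ) inferInstance

/-- vector of conditional probabilities of `U = u` given `Z` and `W`. -/
def Vq (D : Measure (X × Bool)) (κ : Multiset (X × Bool) → Multiset (X × Bool))
    (ρ : Multiset (X × Bool) → X → Bool) : SupOmega X n → (Fin n → Fin 2) → ℝ :=
  fun ω u => cprob (supMeasure n D) (fun ω : SupOmega X n => ω.2) u (G2sig κ ρ) ω

def G4sig (D : Measure (X × Bool)) (κ : Multiset (X × Bool) → Multiset (X × Bool))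
    (ρ : Multiset (X × Bool) → X → Bool) : MeasurableSpace (SupOmega X n) :=
  MeasurableSpace.comap (fun ω : SupOmega X n => ω.1) inferInstance
    ⊔ MeasurableSpace.comap (Vq D κ ρ) inferInstance

open Classical in
/-- size of the `Vq`-class of `u'` -/
def cntq (D : Measure (X × Bool)) (κ : Multiset (X × Bool) → Multiset (X × Bool))
    (ρ : Multiset (X × Bool) → X → Bool) (z : Fin 2 × Fin n → X × Bool)
    (u' : Fin n → Fin 2) : ℕ :=
  (Finset.univ.filter (fun u'' => Vq D κ ρ (z, u'') = Vq D κ ρ (z, u'))).card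

open Classical in
def cntvq (D : Measure (X × Bool)) (κ : Multiset (X × Bool) → Multiset (X × Bool))
    (ρ : Multiset (X × Bool) → X → Bool)
    (p : (Fin 2 × Fin n → X × Bool) × ((Fin n → Fin 2) → ℝ)) : ℝ :=
  ∑ u'' : Fin n → Fin 2, if Vq D κ ρ (p.1, u'') = p.2 then (1:ℝ) else 0

open Classical in
def gq (D : Measure (X × Bool)) (κ : Multiset (X × Bool) → Multiset (X × Bool))
    (ρ : Multiset (X × Bool) → X → Bool) (u : Fin n → Fin 2) : SupOmega X n → ℝ :=
  fun ω => if Vq D κ ρ (ω.1, u) = Vq D κ ρ ω then (cntvq D κ ρ (ω.1, Vq D κ ρ ω))⁻¹ else 0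

section CoreLemmas

variable (D : Measure (X × Bool)) [IsProbabilityMeasure D]

lemma cntvq_eq (z : Fin 2 × Fin n → X × Bool) (u' : Fin n → Fin 2) :
    cntvq D κ ρ (z, Vq D κ ρ (z, u')) = (cntq D κ ρ z u' : ℝ) := by
  classical
  rw [cntvq, cntq]
  rw [Finset.sum_boole]

lemma one_le_cntq (z : Fin 2 × Fin n → X × Bool) (u' : Fin n → Fin 2) :
    1 ≤ cntq D κ ρ z u' := by
  classical
  rw [cntq]
  refine Finset.card_pos.2 ⟨u', ?_⟩
  simp

lemma cntq_le (z : Fin 2 × Fin n → X × Bool) (u' : Fin n → Fin 2) :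
    cntq D κ ρ z u' ≤ 2 ^ n := by
  classical
  calc cntq D κ ρ z u' ≤ (Finset.univ : Finset (Fin n → Fin 2)).card := by
        rw [cntq]; exact Finset.card_filter_le _ _
    _ = 2 ^ n := by rw [Finset.card_univ]; simp [Fintype.card_fun]

lemma cntq_congr {z : Fin 2 × Fin n → X × Bool} {w u' : Fin n → Fin 2}
    (h : Vq D κ ρ (z, w) = Vq D κ ρ (z, u')) : cntq D κ ρ z w = cntq D κ ρ z u' := by
  classical
  rw [cntq, cntq]
  congr 1
  apply Finset.filter_congr
  intro x _
  rw [h]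

lemma WW_meas (hmeas : Measurable (fun s : Fin n → X × Bool => ρ (κ (toMultiset s)))) :
    Measurable (WW κ ρ : SupOmega X n → (X → Bool)) :=
  hmeas.comp measurable_trainOf

lemma G2sig_le (hmeas : Measurable (fun s : Fin n → X × Bool => ρ (κ (toMultiset s)))) :
    (G2sig κ ρ : MeasurableSpace (SupOmega X n))
    ≤ (inferInstance : MeasurableSpace (SupOmega X n)) :=
  sup_le measurable_fst.comap_le (WW_meas hmeas).comap_le

lemma Vq_sm (u : Fin n → Fin 2) :
    StronglyMeasurable[G2sig κ ρ] (fun ω : SupOmega X n => Vq D κ ρ ω u) :=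
  stronglyMeasurable_condExp

lemma Vq_meas2 : Measurable[G2sig κ ρ] (Vq D κ ρ : SupOmega X n → _) := by
  letI : MeasurableSpace (SupOmega X n) := G2sig κ ρ
  exact measurable_pi_lambda _ fun u => (Vq_sm D u).measurable

lemma Vq_meas (hmeas : Measurable (fun s : Fin n → X × Bool => ρ (κ (toMultiset s)))) :
    Measurable (Vq D κ ρ : SupOmega X n → _) :=
  (Vq_meas2 D).mono (G2sig_le hmeas) le_rfl

lemma G4sig_le (hmeas : Measurable (fun s : Fin n → X × Bool => ρ (κ (toMultiset s)))) :
    (G4sig D κ ρ : MeasurableSpace (SupOmega X n))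
    ≤ (inferInstance : MeasurableSpace (SupOmega X n)) :=
  sup_le measurable_fst.comap_le (Vq_meas D hmeas).comap_le

lemma G4sig_le_G2sig : (G4sig D κ ρ : MeasurableSpace (SupOmega X n)) ≤ G2sig κ ρ :=
  sup_le le_sup_left (measurable_iff_comap_le.1 (Vq_meas2 D))

lemma G2sig_eq_comap : (G2sig κ ρ : MeasurableSpace (SupOmega X n))
    = MeasurableSpace.comap (fun ω : SupOmega X n => (ω.1, WW κ ρ ω)) inferInstance := by
  have h : (inferInstance : MeasurableSpace ((Fin 2 × Fin n → X × Bool) × (X → Bool)))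
      = MeasurableSpace.comap Prod.fst inferInstance
        ⊔ MeasurableSpace.comap Prod.snd inferInstance := rfl
  rw [h, MeasurableSpace.comap_sup, MeasurableSpace.comap_comp, MeasurableSpace.comap_comp]
  rfl

lemma G4sig_eq_comap : (G4sig D κ ρ : MeasurableSpace (SupOmega X n))
    = MeasurableSpace.comap (fun ω : SupOmega X n => (ω.1, Vq D κ ρ ω)) inferInstance := by
  have h : (inferInstance :
      MeasurableSpace ((Fin 2 × Fin n → X × Bool) × ((Fin n → Fin 2) → ℝ)))
      = MeasurableSpace.comap Prod.fst inferInstance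
        ⊔ MeasurableSpace.comap Prod.snd inferInstance := rfl
  rw [h, MeasurableSpace.comap_sup, MeasurableSpace.comap_comp, MeasurableSpace.comap_comp]
  rfl

/-- `Vq` is constant on fibers of `(Z, W)`. -/
lemma Vq_const {z : Fin 2 × Fin n → X × Bool} {u₁ u₂ : Fin n → Fin 2}
    (hw : WW κ ρ ((z, u₁) : SupOmega X n) = WW κ ρ ((z, u₂) : SupOmega X n)) :
    Vq D κ ρ (z, u₁) = Vq D κ ρ (z, u₂) := by
  funext u
  have hqm : Measurable[MeasurableSpace.comap
        (fun ω : SupOmega X n => (ω.1, WW κ ρ ω)) inferInstance]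
      (fun ω : SupOmega X n => Vq D κ ρ ω u) := by
    rw [← G2sig_eq_comap]
    exact (Vq_sm D u).measurable
  obtain ⟨S, _, hSA⟩ := hqm (measurableSet_singleton (Vq D κ ρ (z, u₁) u))
  have h1 : ((z, u₁) : SupOmega X n) ∈ (fun ω : SupOmega X n => Vq D κ ρ ω u) ⁻¹' {Vq D κ ρ (z, u₁) u} := rfl
  rw [← hSA] at h1
  have h2 : ((z, u₂) : SupOmega X n) ∈ (fun ω : SupOmega X n => (ω.1, WW κ ρ ω)) ⁻¹' S := by
    show ((z, WW κ ρ ((z, u₂) : SupOmega X n))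
      : (Fin 2 × Fin n → X × Bool) × (X → Bool)) ∈ S
    rw [← hw]
    exact h1
  rw [hSA] at h2
  exact h2.symm

end CoreLemmas

section CoreLemmas2

variable (D : Measure (X × Bool)) [IsProbabilityMeasure D]

lemma measurableSet_eq_pi {α : Type*} [MeasurableSpace α] {f g : α → (Fin n → Fin 2) → ℝ}
    (hf : Measurable f) (hg : Measurable g) : MeasurableSet {a | f a = g a} := by
  have h : {a | f a = g a} = ⋂ u : Fin n → Fin 2, {a | f a u = g a u} := by
    ext a
    simp [funext_iff]
  rw [h]
  exact MeasurableSet.iInter fun u =>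
    measurableSet_eq_fun ((measurable_pi_apply u).comp hf) ((measurable_pi_apply u).comp hg)

lemma measurableSet_Veq (hmeas : Measurable (fun s : Fin n → X × Bool => ρ (κ (toMultiset s))))
    (u'' : Fin n → Fin 2) :
    MeasurableSet {p : (Fin 2 × Fin n → X × Bool) × ((Fin n → Fin 2) → ℝ) |
      Vq D κ ρ (p.1, u'') = p.2} :=
  measurableSet_eq_pi
    ((Vq_meas D hmeas).comp (measurable_fst.prodMk measurable_const)) measurable_snd

lemma measurable_cntvq (hmeas : Measurable (fun s : Fin n → X × Bool => ρ (κ (toMultiset s)))) :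
    Measurable (cntvq D κ ρ :
      (Fin 2 × Fin n → X × Bool) × ((Fin n → Fin 2) → ℝ) → ℝ) := by
  unfold cntvq
  exact Finset.measurable_sum _ fun u'' _ =>
    Measurable.ite (measurableSet_Veq D hmeas u'') measurable_const measurable_const

lemma measurable_phi (hmeas : Measurable (fun s : Fin n → X × Bool => ρ (κ (toMultiset s))))
    (u : Fin n → Fin 2) :
    Measurable (fun p : (Fin 2 × Fin n → X × Bool) × ((Fin n → Fin 2) → ℝ) =>
      if Vq D κ ρ (p.1, u) = p.2 then (cntvq D κ ρ p)⁻¹ else (0:ℝ)) :=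
  Measurable.ite (measurableSet_Veq D hmeas u) (measurable_cntvq D hmeas).inv measurable_const

lemma measurable_pairV (hmeas : Measurable (fun s : Fin n → X × Bool => ρ (κ (toMultiset s)))) :
    Measurable (fun ω : SupOmega X n => (ω.1, Vq D κ ρ ω)) :=
  measurable_fst.prodMk (Vq_meas D hmeas)

lemma measurable_pairV4 :
    Measurable[G4sig D κ ρ] (fun ω : SupOmega X n => (ω.1, Vq D κ ρ ω)) := by
  letI : MeasurableSpace (SupOmega X n) := G4sig D κ ρ
  exact Measurable.prodMk (measurable_iff_comap_le.2 le_sup_left)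
    (measurable_iff_comap_le.2 le_sup_right)

lemma gq_comp (u : Fin n → Fin 2) : gq D κ ρ u =
    (fun p : (Fin 2 × Fin n → X × Bool) × ((Fin n → Fin 2) → ℝ) =>
      if Vq D κ ρ (p.1, u) = p.2 then (cntvq D κ ρ p)⁻¹ else (0:ℝ))
    ∘ (fun ω : SupOmega X n => (ω.1, Vq D κ ρ ω)) := rfl

lemma measurable_gq (hmeas : Measurable (fun s : Fin n → X × Bool => ρ (κ (toMultiset s))))
    (u : Fin n → Fin 2) : Measurable (gq D κ ρ u) := by
  rw [gq_comp]
  exact (measurable_phi D hmeas u).comp (measurable_pairV D hmeas)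

lemma measurable_gq4 (hmeas : Measurable (fun s : Fin n → X × Bool => ρ (κ (toMultiset s))))
    (u : Fin n → Fin 2) : Measurable[G4sig D κ ρ] (gq D κ ρ u) := by
  rw [gq_comp]
  exact (measurable_phi D hmeas u).comp (measurable_pairV4 D)

lemma cntvq_eq' (ω : SupOmega X n) :
    cntvq D κ ρ (ω.1, Vq D κ ρ ω) = (cntq D κ ρ ω.1 ω.2 : ℝ) :=
  cntvq_eq D ω.1 ω.2

lemma gq_apply (u : Fin n → Fin 2) (ω : SupOmega X n) :
    gq D κ ρ u ω
      = if Vq D κ ρ (ω.1, u) = Vq D κ ρ ω then ((cntq D κ ρ ω.1 ω.2 : ℝ))⁻¹ else 0 := by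
  rw [gq, cntvq_eq']

lemma gq_nonneg (u : Fin n → Fin 2) (ω : SupOmega X n) : 0 ≤ gq D κ ρ u ω := by
  rw [gq_apply]
  split
  · positivity
  · exact le_refl 0

lemma gq_le_one (u : Fin n → Fin 2) (ω : SupOmega X n) : gq D κ ρ u ω ≤ 1 := by
  rw [gq_apply]
  split
  · rw [inv_le_one_iff₀]
    right
    exact_mod_cast one_le_cntq D ω.1 ω.2
  · norm_num

end CoreLemmas2

section CoreLemmas3

variable (D : Measure (X × Bool)) [IsProbabilityMeasure D]

lemma cnt_mul_inv (z : Fin 2 × Fin n → X × Bool) (u : Fin n → Fin 2) :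
    (cntq D κ ρ z u : ℝ≥0∞) * ENNReal.ofReal ((cntq D κ ρ z u : ℝ))⁻¹ = 1 := by
  have hc : (cntq D κ ρ z u : ℝ) ≠ 0 := by
    have := one_le_cntq (κ := κ) (ρ := ρ) D z u
    positivity
  rw [← ENNReal.ofReal_natCast (cntq D κ ρ z u), ← ENNReal.ofReal_mul (by positivity),
    mul_inv_cancel₀ hc, ENNReal.ofReal_one]

lemma innerSumq (u : Fin n → Fin 2) (z : Fin 2 × Fin n → X × Bool)
    (B : Set (Fin 2 × Fin n → X × Bool)) (S : Set ((Fin n → Fin 2) → ℝ)) :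
    (∑ w : Fin n → Fin 2,
      Set.indicator ((fun ω : SupOmega X n => (ω.1, Vq D κ ρ ω)) ⁻¹' (B ×ˢ S))
        (fun ω => ENNReal.ofReal (gq D κ ρ u ω)) ((z, w) : SupOmega X n))
    = Set.indicator (B ∩ {z' | Vq D κ ρ (z', u) ∈ S}) (fun _ => (1:ℝ≥0∞)) z := by
  classical
  have hterm : ∀ w : Fin n → Fin 2,
      Set.indicator ((fun ω : SupOmega X n => (ω.1, Vq D κ ρ ω)) ⁻¹' (B ×ˢ S))
        (fun ω => ENNReal.ofReal (gq D κ ρ u ω)) ((z, w) : SupOmega X n)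
      = if z ∈ B ∧ Vq D κ ρ (z, w) ∈ S
          then ENNReal.ofReal (gq D κ ρ u ((z, w) : SupOmega X n)) else 0 := by
    intro w
    rw [Set.indicator_apply]
    congr 1
  by_cases hzB : z ∈ B
  · have hterm2 : ∀ w : Fin n → Fin 2,
        (if z ∈ B ∧ Vq D κ ρ (z, w) ∈ S
          then ENNReal.ofReal (gq D κ ρ u ((z, w) : SupOmega X n)) else 0)
        = if Vq D κ ρ (z, u) = Vq D κ ρ (z, w)
            then (if Vq D κ ρ (z, u) ∈ S
              then ENNReal.ofReal ((cntq D κ ρ z u : ℝ))⁻¹ else 0) else 0 := by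
      intro w
      have hg : gq D κ ρ u ((z, w) : SupOmega X n)
          = if Vq D κ ρ (z, u) = Vq D κ ρ (z, w) then ((cntq D κ ρ z w : ℝ))⁻¹ else 0 :=
        gq_apply D u ((z, w) : SupOmega X n)
      by_cases heq : Vq D κ ρ (z, u) = Vq D κ ρ (z, w)
      · rw [if_pos heq]
        have hSiff : Vq D κ ρ (z, w) ∈ S ↔ Vq D κ ρ (z, u) ∈ S := by rw [heq]
        have hcnt : cntq D κ ρ z w = cntq D κ ρ z u := cntq_congr D heq.symm
        by_cases hVS : Vq D κ ρ (z, u) ∈ S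
        · rw [if_pos hVS, if_pos ⟨hzB, hSiff.2 hVS⟩, hg, if_pos heq, hcnt]
        · rw [if_neg hVS, if_neg (fun hc => hVS (hSiff.1 hc.2))]
      · rw [if_neg heq]
        by_cases hVS : Vq D κ ρ (z, w) ∈ S
        · rw [if_pos ⟨hzB, hVS⟩, hg, if_neg heq, ENNReal.ofReal_zero]
        · rw [if_neg (fun hc => hVS hc.2)]
    calc (∑ w : Fin n → Fin 2,
        Set.indicator ((fun ω : SupOmega X n => (ω.1, Vq D κ ρ ω)) ⁻¹' (B ×ˢ S))
          (fun ω => ENNReal.ofReal (gq D κ ρ u ω)) ((z, w) : SupOmega X n))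
        = ∑ w : Fin n → Fin 2, if Vq D κ ρ (z, u) = Vq D κ ρ (z, w)
            then (if Vq D κ ρ (z, u) ∈ S
              then ENNReal.ofReal ((cntq D κ ρ z u : ℝ))⁻¹ else 0) else 0 := by
          refine Finset.sum_congr rfl fun w _ => ?_
          rw [hterm w, hterm2 w]
      _ = (Finset.univ.filter (fun w : Fin n → Fin 2 =>
            Vq D κ ρ (z, u) = Vq D κ ρ (z, w))).card
          • (if Vq D κ ρ (z, u) ∈ S
              then ENNReal.ofReal ((cntq D κ ρ z u : ℝ))⁻¹ else 0) := by
          rw [Finset.sum_ite, Finset.sum_const, Finset.sum_const_zero, add_zero]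
      _ = (cntq D κ ρ z u : ℝ≥0∞)
          * (if Vq D κ ρ (z, u) ∈ S
              then ENNReal.ofReal ((cntq D κ ρ z u : ℝ))⁻¹ else 0) := by
          rw [nsmul_eq_mul]
          congr 2
          rw [cntq]
          congr 1
          apply Finset.filter_congr
          intro w _
          simp [eq_comm]
      _ = Set.indicator (B ∩ {z' | Vq D κ ρ (z', u) ∈ S}) (fun _ => (1:ℝ≥0∞)) z := by
          by_cases hVS : Vq D κ ρ (z, u) ∈ S
          · rw [if_pos hVS, cnt_mul_inv, Set.indicator_of_mem (Set.mem_inter hzB hVS)]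
          · rw [if_neg hVS, mul_zero,
              Set.indicator_of_notMem (fun hc => hVS hc.2)]
  · have : ∀ w : Fin n → Fin 2,
        Set.indicator ((fun ω : SupOmega X n => (ω.1, Vq D κ ρ ω)) ⁻¹' (B ×ˢ S))
          (fun ω => ENNReal.ofReal (gq D κ ρ u ω)) ((z, w) : SupOmega X n) = 0 := by
      intro w
      rw [hterm w, if_neg (fun hc => hzB hc.1)]
    rw [Finset.sum_congr rfl (fun w _ => this w), Finset.sum_const_zero,
      Set.indicator_of_notMem (fun hc => hzB hc.1)]

end CoreLemmas3

section CoreLemmas4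

variable (D : Measure (X × Bool)) [IsProbabilityMeasure D]

lemma rect_eq (hmeas : Measurable (fun s : Fin n → X × Bool => ρ (κ (toMultiset s))))
    (u : Fin n → Fin 2) {B : Set (Fin 2 × Fin n → X × Bool)} {S : Set ((Fin n → Fin 2) → ℝ)}
    (hB : MeasurableSet B) (hS : MeasurableSet S) :
    (supMeasure n D).restrict {ω : SupOmega X n | ω.2 = u}
      ((fun ω : SupOmega X n => (ω.1, Vq D κ ρ ω)) ⁻¹' (B ×ˢ S))
    = (supMeasure n D).withDensity (fun ω => ENNReal.ofReal (gq D κ ρ u ω))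
      ((fun ω : SupOmega X n => (ω.1, Vq D κ ρ ω)) ⁻¹' (B ×ˢ S)) := by
  set μ := supMeasure n D with hμdef
  set ν := (Measure.pi fun _ : Fin 2 × Fin n => D) with hνdef
  have hμprod : μ = ν.prod (unifN n) := rfl
  set A := (fun ω : SupOmega X n => (ω.1, Vq D κ ρ ω)) ⁻¹' (B ×ˢ S) with hAdef
  have hA : MeasurableSet A := (measurable_pairV D hmeas) (hB.prod hS)
  set T := B ∩ {z' | Vq D κ ρ (z', u) ∈ S} with hTdef
  have hT : MeasurableSet T :=
    hB.inter (((Vq_meas D hmeas).comp (measurable_id.prodMk measurable_const)) hS)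
  -- LHS
  have hLHS : μ.restrict {ω : SupOmega X n | ω.2 = u} A = ν T * (2 : ℝ≥0∞)⁻¹ ^ n := by
    rw [Measure.restrict_apply hA]
    have hset : A ∩ {ω : SupOmega X n | ω.2 = u} = T ×ˢ ({u} : Set (Fin n → Fin 2)) := by
      ext ω
      obtain ⟨z, w⟩ := ω
      simp only [hAdef, hTdef, Set.mem_inter_iff, Set.mem_preimage, Set.mem_prod,
        Set.mem_setOf_eq, Set.mem_singleton_iff]
      constructor
      · rintro ⟨⟨h1, h2⟩, rfl⟩
        exact ⟨⟨h1, h2⟩, rfl⟩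
      · rintro ⟨⟨h1, h2⟩, rfl⟩
        exact ⟨⟨h1, h2⟩, rfl⟩
    rw [hset, hμprod, Measure.prod_prod, unifN_singleton]
  -- RHS
  have hgmeas : Measurable fun ω : SupOmega X n => ENNReal.ofReal (gq D κ ρ u ω) :=
    ENNReal.measurable_ofReal.comp (measurable_gq D hmeas u)
  have hRHS : μ.withDensity (fun ω => ENNReal.ofReal (gq D κ ρ u ω)) A
      = (2 : ℝ≥0∞)⁻¹ ^ n * ν T := by
    rw [withDensity_apply _ hA, ← lintegral_indicator hA, hμprod,
      lintegral_prod _ (hgmeas.indicator hA).aemeasurable]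
    have hinner : ∀ z, (∫⁻ w, A.indicator (fun ω => ENNReal.ofReal (gq D κ ρ u ω)) (z, w)
          ∂(unifN n))
        = T.indicator (fun _ => (2 : ℝ≥0∞)⁻¹ ^ n) z := by
      intro z
      rw [lintegral_fintype]
      have : ∀ w : Fin n → Fin 2, A.indicator (fun ω => ENNReal.ofReal (gq D κ ρ u ω)) (z, w)
          * unifN n {w}
          = A.indicator (fun ω => ENNReal.ofReal (gq D κ ρ u ω)) (z, w) * (2 : ℝ≥0∞)⁻¹ ^ n := by
        intro w
        rw [unifN_singleton]
      rw [Finset.sum_congr rfl fun w _ => this w, ← Finset.sum_mul, innerSumq]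
      by_cases hz : z ∈ T
      · rw [Set.indicator_of_mem hz, Set.indicator_of_mem hz, one_mul]
      · rw [Set.indicator_of_notMem hz, Set.indicator_of_notMem hz, zero_mul]
    rw [lintegral_congr hinner, lintegral_indicator_const hT]
  rw [hLHS, hRHS, mul_comm]

end CoreLemmas4

section CoreLemmas5

variable (D : Measure (X × Bool)) [IsProbabilityMeasure D]

lemma meas_eq_G4 (hmeas : Measurable (fun s : Fin n → X × Bool => ρ (κ (toMultiset s))))
    (u : Fin n → Fin 2) :
    ∀ s : Set (SupOmega X n), MeasurableSet[G4sig D κ ρ] s →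
      (supMeasure n D).restrict {ω : SupOmega X n | ω.2 = u} s
      = (supMeasure n D).withDensity (fun ω => ENNReal.ofReal (gq D κ ρ u ω)) s := by
  set μ := supMeasure n D with hμdef
  set μ₁ := μ.restrict {ω : SupOmega X n | ω.2 = u} with hμ₁def
  set μ₂ := μ.withDensity (fun ω => ENNReal.ofReal (gq D κ ρ u ω)) with hμ₂def
  have hm4 : (G4sig D κ ρ : MeasurableSpace (SupOmega X n))
      ≤ (inferInstance : MeasurableSpace (SupOmega X n)) := G4sig_le D hmeas
  set C : Set (Set (SupOmega X n)) :=
    Set.preimage (fun ω : SupOmega X n => (ω.1, Vq D κ ρ ω)) ''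
      (Set.image2 (· ×ˢ ·) {s : Set (Fin 2 × Fin n → X × Bool) | MeasurableSet s}
        {t : Set ((Fin n → Fin 2) → ℝ) | MeasurableSet t}) with hCdef
  have hgen : (G4sig D κ ρ : MeasurableSpace (SupOmega X n))
      = MeasurableSpace.generateFrom C := by
    rw [G4sig_eq_comap, ← generateFrom_prod, MeasurableSpace.comap_generateFrom]
  have hpi : IsPiSystem C := by
    have h := (isPiSystem_prod (α := Fin 2 × Fin n → X × Bool) (β := (Fin n → Fin 2) → ℝ)).comap
      (fun ω : SupOmega X n => (ω.1, Vq D κ ρ ω))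
    convert h using 1
    rw [hCdef]; rfl
  have hrect : ∀ t ∈ C, μ₁ t = μ₂ t := by
    rintro t ⟨E, hE, rfl⟩
    obtain ⟨B, hB, S, hS, rfl⟩ := hE
    exact rect_eq D hmeas u hB hS
  have huniv : μ₁ Set.univ = μ₂ Set.univ := by
    have h1 : ((fun ω : SupOmega X n => (ω.1, Vq D κ ρ ω)) ⁻¹'
        ((Set.univ : Set (Fin 2 × Fin n → X × Bool)) ×ˢ
          (Set.univ : Set ((Fin n → Fin 2) → ℝ)))) = Set.univ := by
      ext ω; simp
    have := rect_eq D hmeas u (B := Set.univ) (S := Set.univ)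
      MeasurableSet.univ MeasurableSet.univ
    rwa [h1] at this
  have htrim : μ₁.trim hm4 = μ₂.trim hm4 := by
    refine MeasureTheory.ext_of_generate_finite C hgen hpi ?_ ?_
    · intro s hs
      rw [MeasureTheory.trim_measurableSet_eq hm4 (hgen ▸ MeasurableSpace.measurableSet_generateFrom hs),
        MeasureTheory.trim_measurableSet_eq hm4 (hgen ▸ MeasurableSpace.measurableSet_generateFrom hs)]
      exact hrect s hs
    · rw [MeasureTheory.trim_measurableSet_eq hm4 MeasurableSet.univ,
        MeasureTheory.trim_measurableSet_eq hm4 MeasurableSet.univ]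
      exact huniv
  intro s hs
  rw [← MeasureTheory.trim_measurableSet_eq hm4 hs, ← MeasureTheory.trim_measurableSet_eq hm4 hs,
    htrim]

lemma setIntegral_gq_eq (hmeas : Measurable (fun s : Fin n → X × Bool => ρ (κ (toMultiset s))))
    (u : Fin n → Fin 2) {s : Set (SupOmega X n)} (hs : MeasurableSet[G4sig D κ ρ] s) :
    ∫ ω in s, gq D κ ρ u ω ∂(supMeasure n D)
      = ∫ ω in s, (if ω.2 = u then (1:ℝ) else 0) ∂(supMeasure n D) := by
  set μ := supMeasure n D with hμdef
  have hm4 : (G4sig D κ ρ : MeasurableSpace (SupOmega X n))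
      ≤ (inferInstance : MeasurableSpace (SupOmega X n)) := G4sig_le D hmeas
  have hsm : MeasurableSet s := hm4 s hs
  have hRHS : ∫ ω in s, (if ω.2 = u then (1:ℝ) else 0) ∂μ
      = (μ.restrict {ω : SupOmega X n | ω.2 = u} s).toReal := by
    rw [setIntegral_ind μ _ u (measurableSet_sndeq u) hsm, Measure.restrict_apply hsm,
      Set.inter_comm]
  have hLHS : ∫ ω in s, gq D κ ρ u ω ∂μ
      = (μ.withDensity (fun ω => ENNReal.ofReal (gq D κ ρ u ω)) s).toReal := by
    rw [integral_eq_lintegral_of_nonneg_ae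
        (Filter.Eventually.of_forall fun ω => gq_nonneg D u ω)
        (measurable_gq D hmeas u).aestronglyMeasurable,
      withDensity_apply _ hsm]
  rw [hLHS, hRHS, meas_eq_G4 D hmeas u s hs]

/-- the conditional probabilities given `(Z, W)` agree a.e. with the explicit `gq`. -/
lemma cprob_G2_ae (hmeas : Measurable (fun s : Fin n → X × Bool => ρ (κ (toMultiset s))))
    (u : Fin n → Fin 2) :
    cprob (supMeasure n D) (fun ω : SupOmega X n => ω.2) u (G2sig κ ρ)
      =ᵐ[supMeasure n D] gq D κ ρ u := by
  set μ := supMeasure n D with hμdef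
  have hm2 : (G2sig κ ρ : MeasurableSpace (SupOmega X n))
      ≤ (inferInstance : MeasurableSpace (SupOmega X n)) := G2sig_le hmeas
  have hm4 : (G4sig D κ ρ : MeasurableSpace (SupOmega X n))
      ≤ (inferInstance : MeasurableSpace (SupOmega X n)) := G4sig_le D hmeas
  have hf : Integrable (fun ω : SupOmega X n => if ω.2 = u then (1:ℝ) else 0) μ :=
    integrable_ind μ (measurableSet_sndeq u)
  have h42 : (G4sig D κ ρ : MeasurableSpace (SupOmega X n)) ≤ G2sig κ ρ := G4sig_le_G2sig D
  -- step 1 : cprob (G2) is a version of the conditional expectation given G4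
  have hstep1 : cprob μ (fun ω : SupOmega X n => ω.2) u (G2sig κ ρ)
      =ᵐ[μ] μ[fun ω : SupOmega X n => if ω.2 = u then (1:ℝ) else 0 | G4sig D κ ρ] := by
    refine ae_eq_condExp_of_forall_setIntegral_eq hm4 hf ?_ ?_ ?_
    · intro s _ _
      exact integrable_condExp.integrableOn
    · intro s hs _
      exact setIntegral_condExp hm2 hf (h42 s hs)
    · refine ⟨fun ω => Vq D κ ρ ω u, ?_, ?_⟩
      · have hVG4 : Measurable[G4sig D κ ρ] (Vq D κ ρ : SupOmega X n → _) :=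
          measurable_iff_comap_le.2 le_sup_right
        exact Measurable.stronglyMeasurable ((measurable_pi_apply u).comp hVG4)
      · exact Filter.EventuallyEq.rfl
  -- step 2 : gq is also a version
  have hstep2 : gq D κ ρ u
      =ᵐ[μ] μ[fun ω : SupOmega X n => if ω.2 = u then (1:ℝ) else 0 | G4sig D κ ρ] := by
    refine ae_eq_condExp_of_forall_setIntegral_eq hm4 hf ?_ ?_ ?_
    · intro s _ _
      have : Integrable (gq D κ ρ u) μ := by
        refine Integrable.mono' (integrable_const (1:ℝ))
          (measurable_gq D hmeas u).aestronglyMeasurable ?_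
        filter_upwards with ω
        rw [Real.norm_eq_abs, abs_of_nonneg (gq_nonneg D u ω)]
        exact gq_le_one D u ω
      exact this.integrableOn
    · intro s hs _
      exact setIntegral_gq_eq D hmeas u hs
    · exact ⟨gq D κ ρ u, (measurable_gq4 D hmeas u).stronglyMeasurable,
        Filter.EventuallyEq.rfl⟩
  exact hstep1.trans hstep2.symm

end CoreLemmas5

section CoreLemmas6

variable (D : Measure (X × Bool)) [IsProbabilityMeasure D]

lemma sum_negMulLog_gq (ω : SupOmega X n) :
    (∑ v : Fin n → Fin 2, -(gq D κ ρ v ω * Real.log (gq D κ ρ v ω)))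
      = Real.log (cntq D κ ρ ω.1 ω.2) := by
  classical
  set c : ℕ := cntq D κ ρ ω.1 ω.2 with hcdef
  have hc1 : 1 ≤ c := one_le_cntq D ω.1 ω.2
  have hcR : (0:ℝ) < (c:ℝ) := by exact_mod_cast hc1
  set K : ℝ := -(((c:ℝ))⁻¹ * Real.log ((c:ℝ))⁻¹) with hKdef
  have hterm : ∀ v : Fin n → Fin 2,
      -(gq D κ ρ v ω * Real.log (gq D κ ρ v ω))
      = if Vq D κ ρ (ω.1, v) = Vq D κ ρ ω then K else 0 := by
    intro v
    rw [gq_apply]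
    by_cases h : Vq D κ ρ (ω.1, v) = Vq D κ ρ ω
    · rw [if_pos h, if_pos h]
    · rw [if_neg h, if_neg h]
      simp
  rw [Finset.sum_congr rfl fun v _ => hterm v, Finset.sum_ite, Finset.sum_const,
    Finset.sum_const_zero, add_zero]
  have hcard : (Finset.univ.filter (fun v : Fin n → Fin 2 =>
      Vq D κ ρ (ω.1, v) = Vq D κ ρ ω)).card = c := by
    rw [hcdef, cntq]
  rw [hcard, nsmul_eq_mul, hKdef, Real.log_inv]
  field_simp

lemma condEnt_G2 (hmeas : Measurable (fun s : Fin n → X × Bool => ρ (κ (toMultiset s)))) :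
    condEnt (supMeasure n D) (fun ω : SupOmega X n => ω.2)
      (MeasurableSpace.comap (fun ω : SupOmega X n => ω.1) inferInstance
        ⊔ MeasurableSpace.comap
            (fun ω : SupOmega X n => ρ (κ (toMultiset (trainOf ω)))) inferInstance)
    = ∫ ω, Real.log (cntq D κ ρ ω.1 ω.2) ∂(supMeasure n D) := by
  set μ := supMeasure n D with hμdef
  have hG : (MeasurableSpace.comap (fun ω : SupOmega X n => ω.1) inferInstance
        ⊔ MeasurableSpace.comap
            (fun ω : SupOmega X n => ρ (κ (toMultiset (trainOf ω)))) inferInstance)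
      = G2sig κ ρ := rfl
  rw [hG, condEnt]
  have hae : ∀ᵐ ω ∂μ, ∀ v : Fin n → Fin 2,
      cprob μ (fun ω : SupOmega X n => ω.2) v (G2sig κ ρ) ω = gq D κ ρ v ω :=
    ae_all_iff.2 (fun v => cprob_G2_ae D hmeas v)
  refine integral_congr_ae ?_
  filter_upwards [hae] with ω h
  rw [Finset.sum_congr rfl fun v _ => by rw [h v]]
  exact sum_negMulLog_gq D ω

lemma integrable_logcnt (hmeas : Measurable (fun s : Fin n → X × Bool => ρ (κ (toMultiset s)))) :
    Integrable (fun ω : SupOmega X n => Real.log (cntq D κ ρ ω.1 ω.2)) (supMeasure n D) := by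
  have heq : (fun ω : SupOmega X n => Real.log (cntq D κ ρ ω.1 ω.2))
      = fun ω : SupOmega X n => Real.log (cntvq D κ ρ (ω.1, Vq D κ ρ ω)) := by
    funext ω
    rw [cntvq_eq']
  have hm : Measurable (fun ω : SupOmega X n => Real.log (cntq D κ ρ ω.1 ω.2)) := by
    rw [heq]
    exact Real.measurable_log.comp ((measurable_cntvq D hmeas).comp (measurable_pairV D hmeas))
  refine Integrable.mono' (integrable_const (Real.log ((2:ℝ) ^ n)))
    hm.aestronglyMeasurable ?_
  filter_upwards with ω
  have h1 : (1:ℝ) ≤ (cntq D κ ρ ω.1 ω.2 : ℝ) := by exact_mod_cast one_le_cntq D ω.1 ω.2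
  have h2 : (cntq D κ ρ ω.1 ω.2 : ℝ) ≤ (2:ℝ) ^ n := by
    have := cntq_le (κ := κ) (ρ := ρ) D ω.1 ω.2
    exact_mod_cast this
  rw [Real.norm_eq_abs, abs_of_nonneg (Real.log_nonneg h1)]
  exact Real.log_le_log (by linarith) h2

end CoreLemmas6

end Part3

theorem stmt2 {X : Type*} [MeasurableSpace X]
    (H : Set (X → Bool)) (k : ℕ)
    (κ : Multiset (X × Bool) → Multiset (X × Bool))
    (ρ : Multiset (X × Bool) → X → Bool)
    (hscheme : StableCompressionScheme H k κ ρ)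
    (n : ℕ) (hn : k ≤ n)
    (hmeas : Measurable fun s : Fin n → X × Bool => ρ (κ (toMultiset s)))
    (D : Measure (X × Bool)) [IsProbabilityMeasure D]
    (hreal : ∃ h ∈ H, D {z : X × Bool | h z.1 ≠ z.2} = 0) :
    condMI (supMeasure n D) (fun ω => ω.2)
      (fun ω : SupOmega X n => ρ (κ (toMultiset (trainOf ω)))) inferInstance
      (fun ω : SupOmega X n => ω.1) inferInstance
      ≤ 2 * k * Real.log 2 := by
  classical
  obtain ⟨h0, h0H, h0D⟩ := hreal
  set μ := supMeasure n D with hμdef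
  set ν := (Measure.pi fun _ : Fin 2 × Fin n => D) with hνdef
  have hμprod : μ = ν.prod (unifN n) := rfl
  haveI : IsProbabilityMeasure μ := instSupProb D
  have hMI : condMI μ (fun ω : SupOmega X n => ω.2)
      (fun ω : SupOmega X n => ρ (κ (toMultiset (trainOf ω)))) inferInstance
      (fun ω : SupOmega X n => ω.1) inferInstance
      = condEnt μ (fun ω : SupOmega X n => ω.2)
          (MeasurableSpace.comap (fun ω : SupOmega X n => ω.1) inferInstance)
        - condEnt μ (fun ω : SupOmega X n => ω.2)
          (MeasurableSpace.comap (fun ω : SupOmega X n => ω.1) inferInstance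
            ⊔ MeasurableSpace.comap
                (fun ω : SupOmega X n => ρ (κ (toMultiset (trainOf ω)))) inferInstance) := rfl
  rw [hMI, condEnt_fst D, condEnt_G2 D hmeas]
  -- it suffices to lower bound the integral
  have hexp : ((n:ℝ) - 2*k) * Real.log 2 = (n:ℝ) * Real.log 2 - 2*k*Real.log 2 := by ring
  suffices h : ((n:ℝ) - 2*(k:ℝ)) * Real.log 2
      ≤ ∫ ω, Real.log (cntq D κ ρ ω.1 ω.2) ∂μ by
    have h2 : ((n:ℝ) - 2*(k:ℝ)) * Real.log 2
        = (n:ℝ) * Real.log 2 - 2*(k:ℝ)*Real.log 2 := by ring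
    linarith
  -- a.e. realizability of the supersample
  have hgoodae : ∀ᵐ z ∂ν, ∀ c : Fin 2 × Fin n, h0 ((z c).1) = (z c).2 := by
    rw [ae_all_iff]
    intro c
    obtain ⟨B₀, hsub, hB₀m, hB₀0⟩ := exists_measurable_superset_of_null h0D
    have hpre : {z : Fin 2 × Fin n → X × Bool | ¬ h0 ((z c).1) = (z c).2}
        ⊆ (fun z : Fin 2 × Fin n → X × Bool => z c) ⁻¹' B₀ := by
      intro z hz
      exact hsub hz
    have hν0 : ν ((fun z : Fin 2 × Fin n → X × Bool => z c) ⁻¹' B₀) = 0 := by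
      have hrw : ((fun z : Fin 2 × Fin n → X × Bool => z c) ⁻¹' B₀)
          = Set.pi Set.univ (fun i => if i = c then B₀ else Set.univ) := by
        ext z
        simp only [Set.mem_preimage, Set.mem_pi, Set.mem_univ, forall_true_left]
        constructor
        · intro h i
          by_cases hic : i = c
          · subst hic; rw [if_pos rfl]; exact h
          · rw [if_neg hic]; trivial
        · intro h
          have := h c
          rwa [if_pos rfl] at this
      rw [hνdef, hrw, Measure.pi_pi]
      refine Finset.prod_eq_zero (Finset.mem_univ c) ?_
      rw [if_pos rfl]
      exact hB₀0
    exact measure_mono_null hpre hν0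
  have hint : Integrable (fun ω : SupOmega X n => Real.log (cntq D κ ρ ω.1 ω.2)) μ :=
    integrable_logcnt D hmeas
  have hintprod : Integrable
      (fun ω : (Fin 2 × Fin n → X × Bool) × (Fin n → Fin 2) =>
        Real.log (cntq D κ ρ ω.1 ω.2)) (ν.prod (unifN n)) := by
    rw [← hμprod]; exact hint
  have hinner_int : Integrable
      (fun z => ∫ w, Real.log (cntq D κ ρ z w) ∂(unifN n)) ν :=
    hintprod.integral_prod_left
  -- a.e. inner bound
  have hae : ∀ᵐ z ∂ν, ((n:ℝ) - 2*(k:ℝ)) * Real.log 2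
      ≤ ∫ w, Real.log (cntq D κ ρ z w) ∂(unifN n) := by
    filter_upwards [hgoodae] with z hz
    obtain ⟨J, hJk, hflipJ⟩ := scheme_flip hscheme hn h0 h0H hz
    have hcube := cube_final (Fz κ ρ z) J k hJk hflipJ
    have hfib : ∀ w : Fin n → Fin 2,
        Real.log (fibc (Fz κ ρ z) Finset.univ w) ≤ Real.log (cntq D κ ρ z w) := by
      intro w
      have hsub : (Finset.univ.filter (fun v : Fin n → Fin 2 => Fz κ ρ z v = Fz κ ρ z w))
          ⊆ Finset.univ.filter (fun v : Fin n → Fin 2 => Vq D κ ρ (z, v) = Vq D κ ρ (z, w)) := by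
        intro v hv
        simp only [Finset.mem_filter, Finset.mem_univ, true_and] at hv ⊢
        exact Vq_const D hv
      have hle : (fibc (Fz κ ρ z) Finset.univ w : ℝ) ≤ (cntq D κ ρ z w : ℝ) := by
        have : fibc (Fz κ ρ z) Finset.univ w ≤ cntq D κ ρ z w := by
          rw [fibc, cntq]
          exact Finset.card_le_card hsub
        exact_mod_cast this
      have h1 : (0:ℝ) < (fibc (Fz κ ρ z) Finset.univ w : ℝ) := by
        have := one_le_fibc (Fz κ ρ z) (Finset.mem_univ w)
        exact_mod_cast this
      exact Real.log_le_log h1 hle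
    have hintw : ∫ w, Real.log (cntq D κ ρ z w) ∂(unifN n)
        = ∑ w : Fin n → Fin 2, ((2:ℝ) ^ n)⁻¹ * Real.log (cntq D κ ρ z w) := by
      rw [integral_fintype (Integrable.of_finite)]
      refine Finset.sum_congr rfl fun w _ => ?_
      rw [Measure.real, unifN_singleton, toReal_twopow, smul_eq_mul]
    rw [hintw]
    have hsumle : ((n:ℝ) - 2*(k:ℝ)) * 2 ^ n * Real.log 2
        ≤ ∑ w : Fin n → Fin 2, Real.log (cntq D κ ρ z w) :=
      le_trans hcube (Finset.sum_le_sum fun w _ => hfib w)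
    have h2n : (0:ℝ) < (2:ℝ)^n := by positivity
    rw [← Finset.mul_sum]
    calc ((n:ℝ) - 2*(k:ℝ)) * Real.log 2
        = ((2:ℝ)^n)⁻¹ * (((n:ℝ) - 2*(k:ℝ)) * 2 ^ n * Real.log 2) := by
          field_simp
      _ ≤ ((2:ℝ)^n)⁻¹ * ∑ w : Fin n → Fin 2, Real.log (cntq D κ ρ z w) :=
          mul_le_mul_of_nonneg_left hsumle (by positivity)
  calc ((n:ℝ) - 2*(k:ℝ)) * Real.log 2
      = ∫ _z, ((n:ℝ) - 2*(k:ℝ)) * Real.log 2 ∂ν := by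
        rw [integral_const, Measure.real, measure_univ, ENNReal.toReal_one, one_smul]
    _ ≤ ∫ z, (∫ w, Real.log (cntq D κ ρ z w) ∂(unifN n)) ∂ν :=
        integral_mono_ae (integrable_const _) hinner_int hae
    _ = ∫ ω, Real.log (cntq D κ ρ ω.1 ω.2) ∂μ := by
        rw [hμprod, integral_prod _ hintprod]


end
end

section
/- Let n ≥ 1, let Z be a set, fix z = (z_1, …, z_{2n}) ∈ Z^{2n}, and let f : Z^n × Z → ℝ be invariant under permutations of its first argument. Let π be uniformly distributed on the set of bijections from {1,…,2n} to {0,1} × {1,…,n}, and let U = (U_1,…,U_n) be i.i.d. uniform on {0,1}, independent of π. Writing z^π_{i,j} = z_{π^{-1}(i,j)}, one has E[ f( (z^π_{U_1,1}, …, z^π_{U_n,n}); z^π_{1−U_1,1} ) ] = E_{J} [ (1/(n+1)) Σ_{j ∈ J} f( z_{J∖{j}}; z_j ) ], where J is uniformly distributed over the (n+1)-element subsets of {1,…,2n} and z_{J∖{j}} denotes the n-tuple of entries of z indexed by J∖{j} (in any fixed order, by permutation invariance of f). -/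
/- STATEMENT 14: averaging over a uniform bijection π : {1..2n} ≃ {0,1}×{1..n} and uniform
selectors U, the expectation of f evaluated at the selected n-tuple and the co-selected
first-column point equals the average over uniform (n+1)-subsets J and j ∈ J of
f(z_{J∖{j}}; z_j), for any f invariant under permutations of its first argument. -/

noncomputable section

/-- the n-tuple of the entries of `z` indexed by a finset `s` (in increasing order);
returns the constant `dflt` tuple when `s` does not have exactly `n` elements. -/
def tupleN {Z : Type*} {m n : ℕ} (z : Fin m → Z) (dflt : Z) (s : Finset (Fin m)) :
    Fin n → Z :=
  if h : s.card = n then fun i => z ((s.orderIsoOfFin h) i : s) else fun _ => dflt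

set_option maxHeartbeats 1000000 in
theorem stmt14 {Z : Type*} (n : ℕ) (hn : 1 ≤ n) (z : Fin (2 * n) → Z)
    (f : (Fin n → Z) → Z → ℝ)
    -- f is invariant under permutations of its first argument
    (hf : ∀ (σ : Equiv.Perm (Fin n)) (w : Fin n → Z) (w' : Z), f (w ∘ σ) w' = f w w') :
    (∑ σ : Fin (2 * n) ≃ (Fin 2 × Fin n), ∑ u : Fin n → Fin 2,
          f (fun j => z (σ.symm (u j, j)))
            (z (σ.symm (1 - u ⟨0, hn⟩, ⟨0, hn⟩)))) /
        ((Fintype.card (Fin (2 * n) ≃ (Fin 2 × Fin n)) : ℝ) * 2 ^ n)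
      = (∑ J ∈ Finset.powersetCard (n + 1) (Finset.univ : Finset (Fin (2 * n))),
            (1 / ((n : ℝ) + 1)) * ∑ j ∈ J, f (tupleN z (z ⟨0, by omega⟩) (J.erase j)) (z j)) /
          ((2 * n).choose (n + 1) : ℝ) := by
  classical
  set j0 : Fin n := ⟨0, hn⟩ with hj0def
  set P := Finset.powersetCard (n + 1) (Finset.univ : Finset (Fin (2 * n))) with hPdef
  set F : Finset (Fin (2 * n)) → Fin (2 * n) → ℝ :=
    fun J k => f (tupleN z (z ⟨0, by omega⟩) (J.erase k)) (z k) with hFdef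
  set g : (Fin 2 × Fin n ≃ Fin (2 * n)) → ℝ :=
    fun σ => f (fun j => z (σ (0, j))) (z (σ (1, j0))) with hgdef
  -- Step A : the u-average is uniform; kill u and pass to σ⁻¹
  have stepA : (∑ σ : Fin (2 * n) ≃ (Fin 2 × Fin n), ∑ u : Fin n → Fin 2,
        f (fun j => z (σ.symm (u j, j))) (z (σ.symm (1 - u j0, j0))))
      = (2 ^ n : ℝ) * ∑ σ : Fin 2 × Fin n ≃ Fin (2 * n), g σ := by
    rw [Finset.sum_comm]
    have huni : ∀ u : Fin n → Fin 2, (∑ σ : Fin (2 * n) ≃ (Fin 2 × Fin n),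
        f (fun j => z (σ.symm (u j, j))) (z (σ.symm (1 - u j0, j0))))
        = ∑ σ : Fin 2 × Fin n ≃ Fin (2 * n), g σ := by
      intro u
      have hinv : Function.Involutive (fun p : Fin 2 × Fin n => (p.1 + u p.2, p.2)) := by
        intro p
        have : ∀ a b : Fin 2, a + b + b = a := by decide
        simp [this]
      set τ : Equiv.Perm (Fin 2 × Fin n) := hinv.toPerm _ with hτ
      have hτsymm : ∀ p : Fin 2 × Fin n, τ.symm p = (p.1 + u p.2, p.2) := fun p => rfl
      refine Fintype.sum_bijective (fun σ : Fin (2 * n) ≃ (Fin 2 × Fin n) => (σ.trans τ).symm)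
        ⟨fun a b h => ?_, fun ρ => ⟨(τ.trans ρ).symm, ?_⟩⟩ _ _ (fun σ => ?_)
      · have := congrArg Equiv.symm h
        simp only [Equiv.symm_symm] at this
        have := congrArg (fun e => e.trans τ.symm) this
        simpa [Equiv.trans_assoc] using this
      · ext x; simp
      · have h1 : ∀ j, (σ.trans τ).symm (0, j) = σ.symm (u j, j) := by
          intro j
          simp [Equiv.symm_trans_apply, hτsymm, zero_add]
        have h2 : (σ.trans τ).symm (1, j0) = σ.symm (1 - u j0, j0) := by
          have : ∀ a : Fin 2, (1 : Fin 2) + a = 1 - a := by decide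
          simp [Equiv.symm_trans_apply, hτsymm, this]
        simp only [hgdef, h1, h2]
    rw [Finset.sum_congr rfl fun u _ => huni u, Finset.sum_const]
    simp [Fintype.card_fun, mul_comm]
  -- Step C : fiberwise decomposition over (J, k)
  set Φ : (Fin 2 × Fin n ≃ Fin (2 * n)) → Finset (Fin (2 * n)) × Fin (2 * n) :=
    fun σ => (insert (σ (1, j0)) (Finset.image (fun j => σ (0, j)) Finset.univ), σ (1, j0))
    with hΦdef
  set t := P ×ˢ (Finset.univ : Finset (Fin (2 * n))) with htdef
  have hinj : ∀ σ : Fin 2 × Fin n ≃ Fin (2 * n),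
      Function.Injective (fun j : Fin n => σ (0, j)) := by
    intro σ a b h
    have := σ.injective h
    simpa using this
  have hnm : ∀ σ : Fin 2 × Fin n ≃ Fin (2 * n),
      σ (1, j0) ∉ Finset.image (fun j => σ (0, j)) Finset.univ := by
    intro σ hmem
    simp only [Finset.mem_image] at hmem
    obtain ⟨j, -, hj⟩ := hmem
    have := σ.injective hj
    simp [Prod.ext_iff] at this
  have hmaps : ∀ σ : Fin 2 × Fin n ≃ Fin (2 * n), Φ σ ∈ t := by
    intro σ
    simp only [htdef, Finset.mem_product, Finset.mem_univ, and_true, hPdef,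
      Finset.mem_powersetCard]
    refine ⟨Finset.subset_univ _, ?_⟩
    rw [Finset.card_insert_of_notMem (hnm σ), Finset.card_image_of_injective _ (hinj σ)]
    simp
  have hfib : ∀ (J : Finset (Fin (2 * n))) (k : Fin (2 * n)) (σ), Φ σ = (J, k) →
      σ (1, j0) = k ∧ Finset.image (fun j => σ (0, j)) Finset.univ = J.erase k := by
    intro J k σ h
    have h2 : σ (1, j0) = k := congrArg Prod.snd h
    have h1 : insert (σ (1, j0)) (Finset.image (fun j => σ (0, j)) Finset.univ) = J :=
      congrArg Prod.fst h
    refine ⟨h2, ?_⟩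
    rw [← h1, ← h2, Finset.erase_insert (hnm σ)]
  -- value of g on the fiber over (J, k)
  have hconst : ∀ (J : Finset (Fin (2 * n))) (k : Fin (2 * n)) (σ), Φ σ = (J, k) →
      g σ = F J k := by
    intro J k σ h
    obtain ⟨h2, h1⟩ := hfib J k σ h
    have hcard : (J.erase k).card = n := by
      rw [← h1, Finset.card_image_of_injective _ (hinj σ)]
      simp
    have hmem : ∀ j : Fin n, σ (0, j) ∈ J.erase k := by
      intro j
      rw [← h1]
      exact Finset.mem_image_of_mem _ (Finset.mem_univ j)
    set m : Fin n → Fin n :=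
      fun j => ((J.erase k).orderIsoOfFin hcard).symm ⟨σ (0, j), hmem j⟩ with hm
    have hminj : Function.Injective m := by
      intro a b hab
      have h' : σ (0, a) = σ (0, b) := by
        have := congrArg (fun x => ((((J.erase k).orderIsoOfFin hcard) x : (J.erase k)) :
          Fin (2 * n))) hab
        simpa only [hm, OrderIso.apply_symm_apply] using this
      exact hinj σ h'
    have hmbij := Finite.injective_iff_bijective.mp hminj
    set π : Equiv.Perm (Fin n) := Equiv.ofBijective m hmbij with hπ
    have hkey := hf π (tupleN z (z ⟨0, by omega⟩) (J.erase k)) (z k)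
    have htup : (tupleN z (z ⟨0, by omega⟩) (J.erase k) : Fin n → Z) ∘ π
        = fun j => z (σ (0, j)) := by
      funext j
      show tupleN z (z ⟨0, by omega⟩) (J.erase k) (m j) = z (σ (0, j))
      rw [tupleN, dif_pos hcard]
      simp [hm]
    rw [htup] at hkey
    simp only [hgdef, hFdef, h2]
    exact hkey
  -- the fibers over pairs (J, k) with k ∈ J all have the same cardinality
  have hmove : ∀ (τ : Equiv.Perm (Fin (2 * n))) (J J' : Finset (Fin (2 * n)))
      (k k' : Fin (2 * n)), Finset.image (τ : Fin (2 * n) → Fin (2 * n)) J = J' → τ k = k' →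
      ∀ σ : Fin 2 × Fin n ≃ Fin (2 * n), Φ σ = (J, k) → Φ (σ.trans τ) = (J', k') := by
    intro τ J J' k k' himg hτk σ hσ
    obtain ⟨h2, -⟩ := hfib J k σ hσ
    have h1 : insert (σ (1, j0)) (Finset.image (fun j => σ (0, j)) Finset.univ) = J :=
      congrArg Prod.fst hσ
    have hfst : insert (τ (σ (1, j0))) (Finset.image (fun j => τ (σ (0, j))) Finset.univ)
        = J' := by
      rw [← himg, ← h1, Finset.image_insert, Finset.image_image]
      rfl
    have hsnd : τ (σ (1, j0)) = k' := by rw [h2, hτk]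
    simp only [hΦdef, Equiv.trans_apply]
    exact Prod.ext hfst hsnd
  have htrans : ∀ (J J' : Finset (Fin (2 * n))) (k k' : Fin (2 * n)),
      J ∈ P → J' ∈ P → k ∈ J → k' ∈ J' →
      (Finset.univ.filter fun σ : Fin 2 × Fin n ≃ Fin (2 * n) => Φ σ = (J, k)).card
        = (Finset.univ.filter fun σ : Fin 2 × Fin n ≃ Fin (2 * n) => Φ σ = (J', k')).card := by
    intro J J' k k' hJ hJ' hk hk'
    have hcards : J.card = J'.card := by
      rw [(Finset.mem_powersetCard.mp hJ).2, (Finset.mem_powersetCard.mp hJ').2]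
    set e0 := Finset.equivOfCardEq hcards with he0
    set e : {x // x ∈ J} ≃ {x // x ∈ J'} := e0.trans (Equiv.swap (e0 ⟨k, hk⟩) ⟨k', hk'⟩)
      with he
    set τ : Equiv.Perm (Fin (2 * n)) := e.extendSubtype with hτ'
    have hτk : τ k = k' := by
      rw [hτ', Equiv.extendSubtype_apply_of_mem e k hk]
      simp [he, Equiv.swap_apply_left]
    have himg : Finset.image (τ : Fin (2 * n) → Fin (2 * n)) J = J' := by
      apply Finset.eq_of_subset_of_card_le
      · intro x hx
        simp only [Finset.mem_image] at hx
        obtain ⟨y, hy, rfl⟩ := hx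
        exact Equiv.extendSubtype_mem e y hy
      · rw [Finset.card_image_of_injective _ τ.injective, hcards]
    have himg' : Finset.image (τ.symm : Fin (2 * n) → Fin (2 * n)) J' = J := by
      rw [← himg, Finset.image_image]
      simp
    have hτk' : τ.symm k' = k := by rw [← hτk]; simp
    refine Finset.card_nbij' (fun σ => σ.trans τ) (fun σ => σ.trans τ.symm) ?_ ?_ ?_ ?_
    · intro σ hσ
      simp only [Finset.mem_coe, Finset.mem_filter, Finset.mem_univ, true_and] at hσ ⊢
      exact hmove τ J J' k k' himg hτk σ hσ
    · intro σ hσ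
      simp only [Finset.mem_coe, Finset.mem_filter, Finset.mem_univ, true_and] at hσ ⊢
      exact hmove τ.symm J' J k' k himg' hτk' σ hσ
    · intro σ _
      ext p
      simp
    · intro σ _
      ext p
      simp
  -- pick a base pair (J₀, k₀)
  obtain ⟨J₀, hJ₀sub, hJ₀card⟩ := Finset.exists_subset_card_eq
    (show n + 1 ≤ (Finset.univ : Finset (Fin (2 * n))).card by simp; omega)
  have hJ₀P : J₀ ∈ P := Finset.mem_powersetCard.mpr ⟨hJ₀sub, hJ₀card⟩
  obtain ⟨k₀, hk₀⟩ := Finset.card_pos.mp (show 0 < J₀.card by rw [hJ₀card]; omega)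
  set c : ℕ :=
    (Finset.univ.filter fun σ : Fin 2 × Fin n ≃ Fin (2 * n) => Φ σ = (J₀, k₀)).card with hc
  have hcfib : ∀ (J : Finset (Fin (2 * n))) (k : Fin (2 * n)), J ∈ P → k ∈ J →
      (Finset.univ.filter fun σ : Fin 2 × Fin n ≃ Fin (2 * n) => Φ σ = (J, k)).card = c :=
    fun J k hJ hk => htrans J J₀ k k₀ hJ hJ₀P hk hk₀
  have hempty : ∀ (J : Finset (Fin (2 * n))) (k : Fin (2 * n)), k ∉ J →
      (Finset.univ.filter fun σ : Fin 2 × Fin n ≃ Fin (2 * n) => Φ σ = (J, k)) = ∅ := by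
    intro J k hk
    apply Finset.eq_empty_of_forall_notMem
    intro σ hσ
    simp only [Finset.mem_filter, Finset.mem_univ, true_and] at hσ
    obtain ⟨h2, -⟩ := hfib J k σ hσ
    have h1 : insert (σ (1, j0)) (Finset.image (fun j => σ (0, j)) Finset.univ) = J :=
      congrArg Prod.fst hσ
    apply hk
    rw [← h1, ← h2]
    exact Finset.mem_insert_self _ _
  -- counting identity
  have hcount : Fintype.card (Fin 2 × Fin n ≃ Fin (2 * n))
      = (2 * n).choose (n + 1) * ((n + 1) * c) := by
    have h := Finset.sum_fiberwise_of_maps_to (s := Finset.univ) (t := t) (g := Φ) (fun σ _ => hmaps σ) (fun _ => (1 : ℕ))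
    simp only [Finset.sum_const, smul_eq_mul, mul_one] at h
    rw [Finset.card_univ] at h
    rw [← h, htdef, Finset.sum_product]
    have hJrow : ∀ J ∈ P, (∑ k : Fin (2 * n),
        (Finset.univ.filter fun σ : Fin 2 × Fin n ≃ Fin (2 * n) => Φ σ = (J, k)).card)
        = (n + 1) * c := by
      intro J hJ
      rw [← Finset.sum_subset (Finset.subset_univ J)
        (fun x _ hx => by rw [hempty J x hx]; simp)]
      rw [Finset.sum_congr rfl (fun k hk => hcfib J k hJ hk), Finset.sum_const,
        (Finset.mem_powersetCard.mp hJ).2, smul_eq_mul]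
    rw [Finset.sum_congr rfl hJrow, Finset.sum_const, smul_eq_mul, hPdef,
      Finset.card_powersetCard]
    simp
  -- sum of g over all σ
  have hsum : (∑ σ : Fin 2 × Fin n ≃ Fin (2 * n), g σ)
      = (c : ℝ) * ∑ J ∈ P, ∑ k ∈ J, F J k := by
    have h := Finset.sum_fiberwise_of_maps_to (s := Finset.univ) (t := t) (g := Φ) (fun σ _ => hmaps σ) g
    rw [← h, htdef, Finset.sum_product]
    have hJrow : ∀ J ∈ P, (∑ k : Fin (2 * n), ∑ σ ∈ Finset.univ.filter
        (fun σ : Fin 2 × Fin n ≃ Fin (2 * n) => Φ σ = (J, k)), g σ)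
        = ∑ k ∈ J, (c : ℝ) * F J k := by
      intro J hJ
      rw [← Finset.sum_subset (Finset.subset_univ J)
        (fun x _ hx => by rw [hempty J x hx]; simp)]
      refine Finset.sum_congr rfl fun k hk => ?_
      rw [Finset.sum_congr rfl (fun σ hσ => hconst J k σ
        (by simpa using (Finset.mem_filter.mp hσ).2)), Finset.sum_const,
        hcfib J k hJ hk, nsmul_eq_mul]
    rw [Finset.sum_congr rfl hJrow, Finset.mul_sum]
    exact Finset.sum_congr rfl fun J _ => (Finset.mul_sum _ _ _).symm
  -- assemble
  have hMeq : Fintype.card (Fin (2 * n) ≃ (Fin 2 × Fin n))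
      = Fintype.card (Fin 2 × Fin n ≃ Fin (2 * n)) := by
    rw [Fintype.card_equiv finProdFinEquiv.symm, Fintype.card_equiv finProdFinEquiv]
    simp
  have hMpos : 0 < Fintype.card (Fin 2 × Fin n ≃ Fin (2 * n)) :=
    Fintype.card_pos_iff.mpr ⟨finProdFinEquiv⟩
  have hcpos : 0 < c := by
    rcases Nat.eq_zero_or_pos c with h | h
    · rw [hcount, h, mul_zero, mul_zero] at hMpos
      exact absurd hMpos (lt_irrefl 0)
    · exact h
  have hCpos : 0 < (2 * n).choose (n + 1) := Nat.choose_pos (by omega)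
  have hR : (∑ J ∈ P, (1 / ((n : ℝ) + 1)) * ∑ j ∈ J,
      f (tupleN z (z ⟨0, by omega⟩) (J.erase j)) (z j))
      = (1 / ((n : ℝ) + 1)) * ∑ J ∈ P, ∑ k ∈ J, F J k := by
    rw [Finset.mul_sum]
  rw [hR, stepA, hsum, hMeq, hcount]
  have h2pos : (0 : ℝ) < 2 ^ n := by positivity
  have hCne : ((2 * n).choose (n + 1) : ℝ) ≠ 0 := Nat.cast_ne_zero.mpr hCpos.ne'
  have hcne : (c : ℝ) ≠ 0 := Nat.cast_ne_zero.mpr hcpos.ne'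
  have hn1 : ((n : ℝ) + 1) ≠ 0 := by positivity
  push_cast
  field_simp

end
end

section
/- Let M, m, k be positive integers with 1 ≤ m ≤ M, and let X_1, …, X_k be i.i.d. uniform on {1, …, M}. If k ≤ (M/2) · log(M/m), then P( |{1,…,M} ∖ {X_1,…,X_k}| ≥ m ) ≥ 1/2; that is, with probability at least 1/2 at least m elements of {1,…,M} do not appear among the k samples. -/
open Finset

lemma avoid_card {M k : ℕ} (p : Fin M → Prop) [DecidablePred p] :
    (Finset.univ.filter fun x : Fin k → Fin M => ∀ j, p (x j)).card
      = (Finset.univ.filter p).card ^ k := by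
  rw [← Fintype.card_subtype]
  rw [Fintype.card_congr (Equiv.subtypePiEquivPi (p := fun _ : Fin k => p))]
  rw [Fintype.card_fun, Fintype.card_subtype, Fintype.card_fin]

lemma avoid_one {M k : ℕ} (i : Fin M) :
    (Finset.univ.filter fun x : Fin k → Fin M => ∀ j, x j ≠ i).card = (M - 1) ^ k := by
  rw [avoid_card (p := fun v => v ≠ i)]
  rw [Finset.filter_ne' Finset.univ i, Finset.card_erase_of_mem (Finset.mem_univ i)]
  simp

lemma avoid_two {M k : ℕ} (i j : Fin M) (hij : i ≠ j) :
    (Finset.univ.filter fun x : Fin k → Fin M => ∀ l, x l ≠ i ∧ x l ≠ j).card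
      = (M - 2) ^ k := by
  rw [avoid_card (p := fun v => v ≠ i ∧ v ≠ j)]
  have h1 : (Finset.univ.filter fun v : Fin M => v ≠ i ∧ v ≠ j)
      = ({i, j} : Finset (Fin M))ᶜ := by
    ext v; simp [not_or]
  rw [h1, Finset.card_compl, Finset.card_insert_of_notMem (by simpa using hij)]
  simp

lemma card_unseen_eq {M k : ℕ} (x : Fin k → Fin M) :
    ((Finset.univ : Finset (Fin M)) \ Finset.image x Finset.univ).card
      = ∑ i : Fin M, if ∀ j, x j ≠ i then 1 else 0 := by
  rw [Finset.sdiff_eq_filter, Finset.card_filter]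
  refine Finset.sum_congr rfl fun i _ => ?_
  simp [Finset.mem_image, eq_comm]

lemma sumU (M k : ℕ) :
    ∑ x : Fin k → Fin M,
      ((Finset.univ : Finset (Fin M)) \ Finset.image x Finset.univ).card
      = M * (M - 1) ^ k := by
  simp_rw [card_unseen_eq]
  rw [Finset.sum_comm]
  have : ∀ i : Fin M,
      (∑ x : Fin k → Fin M, if ∀ j, x j ≠ i then 1 else 0) = (M - 1) ^ k := by
    intro i
    rw [← Finset.card_filter]
    exact avoid_one i
  simp [this, Finset.card_univ]

lemma sumU2 (M k : ℕ) :
    ∑ x : Fin k → Fin M,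
      (((Finset.univ : Finset (Fin M)) \ Finset.image x Finset.univ).card
        * ((Finset.univ : Finset (Fin M)) \ Finset.image x Finset.univ).card)
      = M * (M - 1) ^ k + M * (M - 1) * (M - 2) ^ k := by
  have key : ∀ x : Fin k → Fin M,
      ((Finset.univ : Finset (Fin M)) \ Finset.image x Finset.univ).card
        * ((Finset.univ : Finset (Fin M)) \ Finset.image x Finset.univ).card
      = ∑ i : Fin M, ∑ j : Fin M,
          if ∀ l, x l ≠ i ∧ x l ≠ j then 1 else 0 := by
    intro x
    rw [card_unseen_eq, Finset.sum_mul_sum]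
    refine Finset.sum_congr rfl fun i _ => Finset.sum_congr rfl fun j _ => ?_
    by_cases hi : ∀ l, x l ≠ i <;> by_cases hj : ∀ l, x l ≠ j <;>
      simp [hi, hj, forall_and] <;> tauto
  simp_rw [key]
  rw [Finset.sum_comm]
  have inner : ∀ i : Fin M,
      (∑ j : Fin M, ∑ x : Fin k → Fin M, if ∀ l, x l ≠ i ∧ x l ≠ j then 1 else 0)
        = (M - 1) ^ k + (M - 1) * (M - 2) ^ k := by
    intro i
    have hx : ∀ j : Fin M,
        (∑ x : Fin k → Fin M, if ∀ l, x l ≠ i ∧ x l ≠ j then 1 else 0)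
          = if j = i then (M - 1) ^ k else (M - 2) ^ k := by
      intro j
      rw [← Finset.card_filter]
      by_cases h : j = i
      · subst h
        simp only [if_pos rfl, and_self]
        have := avoid_one (k := k) j
        simpa [and_self] using this
      · rw [if_neg h]
        exact avoid_two i j (fun hh => h hh.symm)
    simp_rw [hx]
    rw [← Finset.add_sum_erase _ _ (Finset.mem_univ i), if_pos rfl]
    have he : (∑ j ∈ Finset.univ.erase i,
        if j = i then (M - 1) ^ k else (M - 2) ^ k) = (M - 1) * (M - 2) ^ k := by
      rw [Finset.sum_congr rfl (fun j hj => if_neg (Finset.ne_of_mem_erase hj))]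
      rw [Finset.sum_const, Finset.card_erase_of_mem (Finset.mem_univ i)]
      simp [Finset.card_univ, smul_eq_mul]
    rw [he]
  have swap2 : (∑ i : Fin M, ∑ x : Fin k → Fin M, ∑ j : Fin M,
      if ∀ l, x l ≠ i ∧ x l ≠ j then 1 else 0)
      = ∑ i : Fin M, ∑ j : Fin M, ∑ x : Fin k → Fin M,
          if ∀ l, x l ≠ i ∧ x l ≠ j then 1 else 0 :=
    Finset.sum_congr rfl fun i _ => Finset.sum_comm
  rw [swap2, Finset.sum_congr rfl (fun i _ => inner i), Finset.sum_const]
  simp [Finset.card_univ, smul_eq_mul]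
  ring


/- STATEMENT 15 (coupon collector): if X₁,…,X_k are i.i.d. uniform on {1,…,M} and
k ≤ (M/2)·log(M/m) with 1 ≤ m ≤ M, then with probability at least 1/2 at least m elements
of {1,…,M} do not appear among the samples. Since the k samples are i.i.d. uniform, this
probability is the fraction of tuples in (Fin M)^k with at least m unseen elements. -/

set_option maxHeartbeats 1600000 in
theorem stmt15 (M m k : ℕ) (hm : 1 ≤ m) (hmM : m ≤ M) (hk : 1 ≤ k)
    (hkbound : (k : ℝ) ≤ ((M : ℝ) / 2) * Real.log ((M : ℝ) / (m : ℝ))) :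
    (1 : ℝ) / 2 ≤
      ((Finset.univ.filter fun x : Fin k → Fin M =>
          m ≤ ((Finset.univ : Finset (Fin M)) \ Finset.image x Finset.univ).card).card : ℝ)
        / (M ^ k : ℕ) := by
  have hk1 : (1:ℝ) ≤ k := by exact_mod_cast hk
  have hmltM : m < M := by
    rcases lt_or_eq_of_le hmM with h | h
    · exact h
    · exfalso
      have h1 : (M:ℝ)/(m:ℝ) = 1 := by
        rw [h]
        have : (0:ℝ) < (M:ℝ) := by
          have : 0 < M := by omega
          exact_mod_cast this
        field_simp
      rw [h1, Real.log_one, mul_zero] at hkbound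
      linarith
  have hM2 : 2 ≤ M := by omega
  have hMr : (2:ℝ) ≤ (M:ℝ) := by exact_mod_cast hM2
  have hmr : (1:ℝ) ≤ (m:ℝ) := by exact_mod_cast hm
  have hmrM : (m:ℝ) < (M:ℝ) := by exact_mod_cast hmltM
  have hM0 : (0:ℝ) < M := by linarith
  have hm0 : (0:ℝ) < m := by linarith
  have hM1 : (0:ℝ) < (M:ℝ) - 1 := by linarith
  obtain ⟨L, hLdef⟩ : ∃ x : ℝ, x = Real.log ((M:ℝ)/(m:ℝ)) := ⟨_, rfl⟩
  rw [← hLdef] at hkbound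
  have hL0 : 0 ≤ L := hLdef ▸ Real.log_nonneg (by rw [le_div_iff₀ hm0]; linarith)
  obtain ⟨c, hcdef⟩ : ∃ x : ℝ, x = (M:ℝ)/(2*((M:ℝ)-1)) * L := ⟨_, rfl⟩
  obtain ⟨t, htdef⟩ : ∃ x : ℝ, x = Real.exp (-c) := ⟨_, rfl⟩
  obtain ⟨s, hsdef⟩ : ∃ x : ℝ, x = (((M:ℝ)-1)/(M:ℝ))^k := ⟨_, rfl⟩
  have hc0 : 0 ≤ c := hcdef ▸ mul_nonneg (by positivity) hL0
  have ht0 : 0 < t := htdef ▸ Real.exp_pos _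
  have ht1 : t ≤ 1 := htdef ▸ Real.exp_le_one_iff.2 (by linarith)
  have hs0 : 0 ≤ s := by rw [hsdef]; positivity
  have hs1 : s ≤ 1 := by
    rw [hsdef]
    apply pow_le_one₀ (by positivity)
    rw [div_le_one hM0]; linarith
  -- s ≥ t
  have hst : t ≤ s := by
    have h2 : (M:ℝ)/((M:ℝ)-1) ≤ Real.exp (1/((M:ℝ)-1)) := by
      have h3 := Real.add_one_le_exp (1/((M:ℝ)-1))
      have h4 : (M:ℝ)/((M:ℝ)-1) = 1/((M:ℝ)-1) + 1 := by field_simp; ring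
      linarith
    have h1 : Real.exp (-(1/((M:ℝ)-1))) ≤ ((M:ℝ)-1)/(M:ℝ) := by
      rw [Real.exp_neg, inv_le_comm₀ (Real.exp_pos _) (by positivity), inv_div]
      exact h2
    have h5 : Real.exp (-((k:ℝ)/((M:ℝ)-1))) ≤ s := by
      rw [hsdef]
      calc Real.exp (-((k:ℝ)/((M:ℝ)-1)))
          = (Real.exp (-(1/((M:ℝ)-1))))^k := by
            rw [← Real.exp_nat_mul]; ring_nf
        _ ≤ (((M:ℝ)-1)/(M:ℝ))^k := pow_le_pow_left₀ (Real.exp_pos _).le h1 k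
    rw [htdef]
    refine le_trans (Real.exp_le_exp.2 ?_) h5
    rw [neg_le_neg_iff, div_le_iff₀ hM1]
    have hceq : c * ((M:ℝ)-1) = (M:ℝ)/2 * L := by
      rw [hcdef]; field_simp
    rw [hceq]
    exact hkbound
  -- t ≥ m/M
  have hcL : c ≤ L := by
    have hfac : (M:ℝ)/(2*((M:ℝ)-1)) ≤ 1 := by
      rw [div_le_one (by linarith)]; linarith
    calc c = (M:ℝ)/(2*((M:ℝ)-1)) * L := hcdef
      _ ≤ 1 * L := mul_le_mul_of_nonneg_right hfac hL0
      _ = L := one_mul L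
  have hLmM : Real.log ((m:ℝ)/(M:ℝ)) = -L := by
    rw [hLdef, ← Real.log_inv]
    congr 1
    rw [inv_div]
  have htm : (m:ℝ)/(M:ℝ) ≤ t := by
    rw [htdef, show (m:ℝ)/(M:ℝ) = Real.exp (Real.log ((m:ℝ)/(M:ℝ))) from
      (Real.exp_log (by positivity)).symm, hLmM]
    exact Real.exp_le_exp.2 (by linarith)
  have htm' : (m:ℝ) ≤ (M:ℝ) * t := by
    rw [← div_le_iff₀' hM0]
    exact htm
  -- tangent line (convexity of exp)
  obtain ⟨β, hβdef⟩ : ∃ x : ℝ, x = ((M:ℝ)-2)/(M:ℝ) := ⟨_, rfl⟩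
  have hβ0 : 0 ≤ β := hβdef ▸ div_nonneg (by linarith) hM0.le
  have hβ1 : β ≤ 1 := by rw [hβdef, div_le_one hM0]; linarith
  have hconv : Real.exp ((1-β) • (0:ℝ) + β • (-c)) ≤
      (1-β) • Real.exp 0 + β • Real.exp (-c) :=
    convexOn_exp.2 (Set.mem_univ _) (Set.mem_univ _) (by linarith) hβ0 (by ring)
  have htan0 : Real.exp (-(β*c)) ≤ 1 - β + β * t := by
    simp only [smul_eq_mul, mul_zero, zero_add, Real.exp_zero, mul_one] at hconv
    calc Real.exp (-(β*c)) = Real.exp ((1-β) * 0 + β * (-c)) := by ring_nf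
      _ ≤ (1-β) * 1 + β * Real.exp (-c) := by
          simpa [mul_comm] using hconv
      _ = 1 - β + β * t := by rw [htdef]; ring
  -- m = M * t * exp(-(β*c))
  have hmeq : (m:ℝ) = (M:ℝ) * (t * Real.exp (-(β*c))) := by
    have h6 : c * (1 + β) = L := by
      rw [hcdef, hβdef]; field_simp; ring
    have h7 : t * Real.exp (-(β*c)) = Real.exp (-L) := by
      rw [htdef, ← Real.exp_add, ← h6]; ring_nf
    rw [h7, ← hLmM, Real.exp_log (by positivity)]
    field_simp
  have htan : ((M:ℝ)-2) * (t * (1-t)) ≤ (M:ℝ) * t - m := by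
    have h8 : (M:ℝ) * t - m = (M:ℝ) * t * (1 - Real.exp (-(β*c))) := by
      rw [hmeq]; ring
    have h9 : β * (1 - t) ≤ 1 - Real.exp (-(β*c)) := by linarith
    calc ((M:ℝ)-2) * (t * (1-t)) = (M:ℝ) * t * (β * (1-t)) := by
          rw [hβdef]; field_simp
      _ ≤ (M:ℝ) * t * (1 - Real.exp (-(β*c))) := by
          apply mul_le_mul_of_nonneg_left h9 (by positivity)
      _ = (M:ℝ) * t - m := h8.symm
  -- key real inequality
  have hkeyt : 2*((M:ℝ)*t)*(1-t) ≤ ((M:ℝ)*t - m + 1)^2 := by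
    nlinarith [sq_nonneg (((M:ℝ)-2)*(t*(1-t))), sq_nonneg (2*t-1),
      mul_nonneg (sub_nonneg.2 hβ1) (mul_nonneg ht0.le (sub_nonneg.2 ht1)),
      mul_nonneg (mul_nonneg (by linarith : (0:ℝ) ≤ (M:ℝ)-2) ht0.le) (sub_nonneg.2 ht1)]
  have hMst : (M:ℝ)*t ≤ (M:ℝ)*s := mul_le_mul_of_nonneg_left hst hM0.le
  have hMsm : (m:ℝ) ≤ (M:ℝ)*s := htm'.trans hMst
  have hkey : 2*((M:ℝ)*s)*(1-s) ≤ ((M:ℝ)*s - m + 1)^2 := by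
    have hdiff : ((M:ℝ)*s - m + 1)^2 - 2*((M:ℝ)*s)*(1-s)
        - (((M:ℝ)*t - m + 1)^2 - 2*((M:ℝ)*t)*(1-t))
        = (M:ℝ)*(s-t)*((((M:ℝ)*s-m)+((M:ℝ)*t-m))+2*(s+t)) := by ring
    have hnn : (0:ℝ) ≤ (M:ℝ)*(s-t)*((((M:ℝ)*s-m)+((M:ℝ)*t-m))+2*(s+t)) :=
      mul_nonneg (mul_nonneg hM0.le (by linarith)) (by linarith)
    linarith
  -- Chebyshev counting part
  classical
  have hcardfun : Fintype.card (Fin k → Fin M) = M ^ k := by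
    rw [Fintype.card_fun, Fintype.card_fin, Fintype.card_fin]
  obtain ⟨a, hadef⟩ : ∃ x : ℝ, x = ((M:ℝ)-1)^k := ⟨_, rfl⟩
  obtain ⟨b, hbdef⟩ : ∃ x : ℝ, x = ((M:ℝ)-2)^k := ⟨_, rfl⟩
  obtain ⟨N, hNdef⟩ : ∃ x : ℝ, x = ((M:ℝ))^k := ⟨_, rfl⟩
  have hN0 : 0 < N := by rw [hNdef]; positivity
  have hsum1 : ∑ x : Fin k → Fin M,
      (((Finset.univ : Finset (Fin M)) \ Finset.image x Finset.univ).card : ℝ) = M * a := by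
    rw [hadef, ← Nat.cast_sum]
    rw [sumU M k]
    push_cast [Nat.cast_sub (by omega : 1 ≤ M)]
    ring
  have hsum2 : ∑ x : Fin k → Fin M,
      ((((Finset.univ : Finset (Fin M)) \ Finset.image x Finset.univ).card : ℝ)
        * (((Finset.univ : Finset (Fin M)) \ Finset.image x Finset.univ).card : ℝ))
      = M * a + M * ((M:ℝ)-1) * b := by
    have hc : ∀ x : Fin k → Fin M,
        ((((Finset.univ : Finset (Fin M)) \ Finset.image x Finset.univ).card : ℝ)
          * (((Finset.univ : Finset (Fin M)) \ Finset.image x Finset.univ).card : ℝ))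
        = ((((Finset.univ : Finset (Fin M)) \ Finset.image x Finset.univ).card
            * ((Finset.univ : Finset (Fin M)) \ Finset.image x Finset.univ).card : ℕ) : ℝ) := by
      intro x; push_cast; ring
    simp_rw [hc]
    rw [← Nat.cast_sum, sumU2 M k]
    rw [hadef, hbdef]
    push_cast [Nat.cast_sub (by omega : 1 ≤ M), Nat.cast_sub (by omega : 2 ≤ M)]
    ring
  have hNa : a = s * N := by
    rw [hadef, hNdef, hsdef, div_pow]
    field_simp
  have hbb : b ≤ s^2 * N := by
    have hb1 : (0:ℝ) ≤ ((M:ℝ)-2)*(M:ℝ) := mul_nonneg (by linarith) hM0.le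
    have hb2 : ((M:ℝ)-2)*(M:ℝ) ≤ ((M:ℝ)-1)^2 := by nlinarith [sq_nonneg ((M:ℝ)-1), hMr]
    have h1 : ((((M:ℝ)-2)*(M:ℝ)))^k ≤ ((((M:ℝ)-1))^2)^k := pow_le_pow_left₀ hb1 hb2 k
    rw [mul_pow, ← pow_mul, mul_comm 2 k, pow_mul] at h1
    have h2 : b * N ≤ a^2 := by rw [hadef, hbdef, hNdef]; exact h1
    rw [hNa] at h2
    calc b = b * N / N := by field_simp
      _ ≤ (s*N)^2 / N := by gcongr
      _ = s^2 * N := by field_simp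
  -- the bad set
  obtain ⟨Bset, hBdef⟩ : ∃ B : Finset (Fin k → Fin M),
      B = Finset.univ.filter fun x : Fin k → Fin M =>
        ¬ m ≤ ((Finset.univ : Finset (Fin M)) \ Finset.image x Finset.univ).card := ⟨_, rfl⟩
  have hAB : (Finset.univ.filter fun x : Fin k → Fin M =>
        m ≤ ((Finset.univ : Finset (Fin M)) \ Finset.image x Finset.univ).card).card
      + Bset.card = M ^ k := by
    rw [hBdef, Finset.card_filter_add_card_filter_not, Finset.card_univ, hcardfun]
  -- Chebyshev
  obtain ⟨Q, hQdef⟩ : ∃ x : ℝ, x = ((M:ℝ)*s - m + 1)^2 := ⟨_, rfl⟩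
  have hQ1 : (1:ℝ) ≤ Q := by
    rw [hQdef]
    have h0 : (1:ℝ) ≤ (M:ℝ)*s - m + 1 := by linarith only [hMsm]
    calc (1:ℝ) = 1^2 := by norm_num
      _ ≤ ((M:ℝ)*s - m + 1)^2 := pow_le_pow_left₀ zero_le_one h0 2
  have hQ0 : (0:ℝ) < Q := lt_of_lt_of_le one_pos hQ1
  have hBQ : (Bset.card : ℝ) * Q ≤ ∑ x ∈ Bset,
      ((M:ℝ)*s - (((Finset.univ : Finset (Fin M)) \ Finset.image x Finset.univ).card : ℝ))^2 := by
    calc (Bset.card : ℝ) * Q = ∑ _x ∈ Bset, Q := by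
          rw [Finset.sum_const, nsmul_eq_mul]
      _ ≤ _ := by
          apply Finset.sum_le_sum
          intro x hx
          rw [hBdef, Finset.mem_filter] at hx
          have hxm : (((Finset.univ : Finset (Fin M)) \ Finset.image x Finset.univ).card : ℝ)
              ≤ (m:ℝ) - 1 := by
            have : ((Finset.univ : Finset (Fin M)) \ Finset.image x Finset.univ).card + 1 ≤ m := by
              omega
            have := (Nat.cast_le (α := ℝ)).2 this
            push_cast at this
            linarith only [this]
          rw [hQdef]
          apply pow_le_pow_left₀ (by linarith only [hMsm]) (by linarith only [hxm, hMsm])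
  have hsubset : ∑ x ∈ Bset,
      ((M:ℝ)*s - (((Finset.univ : Finset (Fin M)) \ Finset.image x Finset.univ).card : ℝ))^2
      ≤ ∑ x : Fin k → Fin M,
      ((M:ℝ)*s - (((Finset.univ : Finset (Fin M)) \ Finset.image x Finset.univ).card : ℝ))^2 :=
    Finset.sum_le_sum_of_subset_of_nonneg (Finset.subset_univ _) (fun x _ _ => sq_nonneg _)
  have hexpand : ∑ x : Fin k → Fin M,
      ((M:ℝ)*s - (((Finset.univ : Finset (Fin M)) \ Finset.image x Finset.univ).card : ℝ))^2
      = N*((M:ℝ)*s)^2 - 2*((M:ℝ)*s)*((M:ℝ)*a) + ((M:ℝ)*a + (M:ℝ)*((M:ℝ)-1)*b) := by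
    have h3 : ∀ x : Fin k → Fin M,
        ((M:ℝ)*s - (((Finset.univ : Finset (Fin M)) \ Finset.image x Finset.univ).card : ℝ))^2
        = ((M:ℝ)*s)^2
          - 2*((M:ℝ)*s)*(((Finset.univ : Finset (Fin M)) \ Finset.image x Finset.univ).card : ℝ)
          + ((((Finset.univ : Finset (Fin M)) \ Finset.image x Finset.univ).card : ℝ)
            * (((Finset.univ : Finset (Fin M)) \ Finset.image x Finset.univ).card : ℝ)) := by
      intro x; ring
    simp_rw [h3]
    rw [Finset.sum_add_distrib, Finset.sum_sub_distrib, Finset.sum_const, ← Finset.mul_sum,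
      Finset.card_univ, hcardfun, hsum1, hsum2, hNdef]
    push_cast
    ring
  have hfinal1 : (Bset.card : ℝ) * Q ≤ N * ((M:ℝ)*s*(1-s)) := by
    have h4 : (M:ℝ)*((M:ℝ)-1)*b ≤ (M:ℝ)*((M:ℝ)-1)*(s^2*N) :=
      mul_le_mul_of_nonneg_left hbb (mul_nonneg hM0.le (by linarith only [hMr]))
    have h5 : N*((M:ℝ)*s)^2 - 2*((M:ℝ)*s)*((M:ℝ)*(s*N))
        + ((M:ℝ)*(s*N) + (M:ℝ)*((M:ℝ)-1)*(s^2*N)) = N * ((M:ℝ)*s*(1-s)) := by ring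
    rw [hNa] at hexpand
    have hchain := hBQ.trans (hsubset.trans_eq hexpand)
    linarith only [h4, h5, hchain]
  have h2B : 2 * (Bset.card : ℝ) ≤ N := by
    have h6 : N * (2*((M:ℝ)*s)*(1-s)) ≤ N * Q := by
      rw [hQdef]
      exact mul_le_mul_of_nonneg_left hkey hN0.le
    have h7 : (2 * (Bset.card:ℝ)) * Q ≤ N * Q := by
      calc (2 * (Bset.card:ℝ)) * Q = 2 * ((Bset.card:ℝ) * Q) := by ring
        _ ≤ 2 * (N * ((M:ℝ)*s*(1-s))) := by linarith only [hfinal1]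
        _ = N * (2*((M:ℝ)*s)*(1-s)) := by ring
        _ ≤ N * Q := h6
    exact le_of_mul_le_mul_right h7 hQ0
  -- conclude
  have h2Bn : 2 * Bset.card ≤ M ^ k := by
    have : (2 * (Bset.card:ℝ)) ≤ ((M ^ k : ℕ) : ℝ) := by
      rw [hNdef] at h2B
      push_cast
      linarith only [h2B]
    exact_mod_cast this
  have hA : M ^ k ≤ 2 * (Finset.univ.filter fun x : Fin k → Fin M =>
        m ≤ ((Finset.univ : Finset (Fin M)) \ Finset.image x Finset.univ).card).card := by
    omega
  have hNpos : (0:ℝ) < ((M ^ k : ℕ) : ℝ) := by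
    have : 0 < M ^ k := by positivity
    exact_mod_cast this
  rw [le_div_iff₀ hNpos]
  have hA' : ((M ^ k : ℕ) : ℝ) ≤ 2 * ((Finset.univ.filter fun x : Fin k → Fin M =>
        m ≤ ((Finset.univ : Finset (Fin M)) \ Finset.image x Finset.univ).card).card : ℝ) := by
    exact_mod_cast hA
  linarith only [hA']
end
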